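/- arXiv:0803.2204 — 3 statements merged into one kernel-verified Lean document; each statement's English description precedes it below -/
import Mathlib

section
/- For every g ≥ 0 and n ≥ 2 (with the convention F_{−1} := 0), the n-point functions satisfy, as an identity of rational functions in x_1,…,x_n over ℚ: (2g+n−1) F_g(x_1,…,x_n) = ((Σ_{j=1}^n x_j)^3/12) F_{g−1}(x_1,…,x_n) + (1/(2 Σ_{j=1}^n x_j)) Σ_{g'=0}^{g} Σ_{{1,…,n}=I⊔J, I,J≠∅} (Σ_{i∈I} x_i)^2 (Σ_{i∈J} x_i)^2 F_{g'}(x_I) F_{g−g'}(x_J), where the inner sum runs over ordered pairs of disjoint nonempty sets I, J with I ∪ J = {1,…,n}. -/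
open MvPolynomial Finset

noncomputable section

/-- The polynomial ring `ℚ[x_1,…,x_n]`. -/
abbrev R (n : ℕ) : Type := MvPolynomial (Fin n) ℚ

/-- The field of rational functions `ℚ(x_1,…,x_n)`. -/
abbrev K (n : ℕ) : Type := FractionRing (R n)

/-- `x_1 + ⋯ + x_n` as an element of `K n`. -/
def SX (n : ℕ) : K n := algebraMap (R n) (K n) (∑ j, X j)

/-- `x_1^3 + ⋯ + x_n^3` as an element of `K n`. -/
def SX3 (n : ℕ) : K n := algebraMap (R n) (K n) (∑ j, (X j)^3)

/-- `Δ(x_1,…,x_n) = ((Σ x_j)^3 − Σ x_j^3)/3`. -/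
def Dlt (n : ℕ) : K n := ((SX n)^3 - SX3 n) / 3

/-- The ring homomorphism `ℚ[x_1,…,x_{|I|}] → ℚ(x_1,…,x_n)` substituting the variables
of the subset `I` (in increasing order). -/
def embRH {n : ℕ} (I : Finset (Fin n)) : R I.card →+* K n :=
  (algebraMap (R n) (K n)).comp
    (MvPolynomial.rename (fun i : Fin I.card => ((I.orderIsoOfFin rfl) i : Fin n))).toRingHom

lemma embRH_inj {n : ℕ} (I : Finset (Fin n)) : Function.Injective (embRH I) := by
  have h1 : Function.Injective (fun i : Fin I.card => ((I.orderIsoOfFin rfl) i : Fin n)) := by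
    intro i j hij
    exact (I.orderIsoOfFin rfl).injective (Subtype.val_injective hij)
  have h2 := (IsFractionRing.injective (R n) (K n)).comp (MvPolynomial.rename_injective _ h1)
  simpa [embRH, RingHom.coe_comp] using h2

/-- The field embedding `ℚ(x_1,…,x_{|I|}) → ℚ(x_1,…,x_n)` substituting the variables
of the subset `I` (in increasing order).  Used for expressions like `G_{r'}(x_I)`. -/
def emb {n : ℕ} (I : Finset (Fin n)) : K I.card →+* K n :=
  IsFractionRing.lift (embRH_inj I)

/-- The normalized `n`-point functions `G_g(x_1,…,x_n)`, defined with a fuel parameter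
(first argument) for structural recursion; for `fuel ≥ n` this computes the recursively
defined normalized `n`-point function:  `G_0(x) = x^{-2}`, `G_g(x) = 0` for `g ≥ 1`, and
for `n ≥ 2`,
`G_g = Σ_{r+s=g} ((2r+n−3)!!/(4^s(2r+2s+n−1)!!)) P_r Δ^s` where
`P_r = (1/(2Σx_j)) Σ_{I⊔J={1..n}, I,J≠∅} (Σ_I x)²(Σ_J x)² Σ_{r'≤r} G_{r'}(x_I)G_{r−r'}(x_J)`. -/
def Gf : (fuel : ℕ) → (n : ℕ) → ℕ → K n
  | _, 0, _ => 0
  | _, 1, 0 => (algebraMap (R 1) (K 1) (X 0)) ^ (-2 : ℤ)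
  | _, 1, _+1 => 0
  | 0, _+2, _ => 0
  | fuel+1, n+2, g =>
      ∑ s ∈ Finset.range (g+1),
        (((Nat.doubleFactorial (2*(g-s)+(n+2)-3) : ℚ) /
          (4^s * (Nat.doubleFactorial (2*g+(n+2)-1) : ℚ))) : K (n+2)) *
        ((2 * SX (n+2))⁻¹ *
          ∑ I : Finset (Fin (n+2)),
            if I ≠ ∅ ∧ I ≠ univ then
              (algebraMap (R (n+2)) (K (n+2)) (∑ i ∈ I, X i))^2 *
              (algebraMap (R (n+2)) (K (n+2)) (∑ i ∈ Iᶜ, X i))^2 *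
              ∑ r' ∈ Finset.range ((g-s)+1),
                emb I (Gf fuel I.card r') * emb Iᶜ (Gf fuel Iᶜ.card ((g-s) - r'))
            else 0) *
        (Dlt (n+2))^s

/-- The normalized `n`-point function `G_g(x_1,…,x_n)` as an element of `ℚ(x_1,…,x_n)`. -/
def Gnpt (n g : ℕ) : K n := Gf n n g

/-- `P_r(x_1,…,x_n)`. -/
def Ppoly (n r : ℕ) : K n :=
  (2 * SX n)⁻¹ *
    ∑ I : Finset (Fin n),
      if I ≠ ∅ ∧ I ≠ univ then
        (algebraMap (R n) (K n) (∑ i ∈ I, X i))^2 *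
        (algebraMap (R n) (K n) (∑ i ∈ Iᶜ, X i))^2 *
        ∑ r' ∈ Finset.range (r+1), emb I (Gnpt I.card r') * emb Iᶜ (Gnpt Iᶜ.card (r - r'))
      else 0

/-- The `n`-point function `F_g(x_1,…,x_n) = Σ_{h+d=g} (1/d!)((Σx_j^3)/24)^d G_h(x_1,…,x_n)`. -/
def Fnpt (n g : ℕ) : K n :=
  ∑ d ∈ Finset.range (g+1),
    ((1 / (Nat.factorial d : ℚ)) : K n) * (SX3 n / 24)^d * Gnpt n (g-d)

open Classical in
/-- The coefficient of the monomial `Π x_j^{d_j}` of an element of `ℚ(x_1,…,x_n)` which is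
a polynomial (junk value `0` otherwise). -/
def coeffK {n : ℕ} (f : K n) (d : Fin n → ℕ) : ℚ :=
  if h : ∃ p : R n, algebraMap (R n) (K n) p = f then
    MvPolynomial.coeff (Finsupp.equivFunOnFinite.symm d) h.choose
  else 0

/-- The intersection index `⟨τ_{d_1} ⋯ τ_{d_n}⟩_g`, i.e. the coefficient of `Π x_j^{d_j}`
in `F_g(x_1,…,x_n)`.  For `(g,n) = (0,1), (0,2)` and nonnegative `d_j` the value is `0`
(the conventional values `⟨τ_{-2}⟩_0 = 1`, `⟨τ_k τ_{-1-k}⟩_0 = (-1)^k` have a negative index). -/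
def bracket (g : ℕ) {n : ℕ} (d : Fin n → ℕ) : ℚ :=
  if g = 0 ∧ n ≤ 2 then 0 else coeffK (Fnpt n g) d

/-- `⟨τ_j Π_{i ∈ I} τ_{d_i}⟩_g` for a subset `I ⊆ {1,…,n}`. -/
def bracketI (g : ℕ) {n : ℕ} (j : ℕ) (I : Finset (Fin n)) (d : Fin n → ℕ) : ℚ :=
  bracket g (Fin.cons j (fun i : Fin I.card => d ((I.orderIsoOfFin rfl) i)))


/-! ### Laurent expansions in `y` (formal series in `ℚ[x_1,…,x_n][[y,y⁻¹]]` of bounded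
`y`-degree, realized as Hahn/Laurent series in the variable `t = y⁻¹`, so that the
coefficient of `y^k` is the Hahn coefficient at `-k`). -/

/-- Laurent series in `t = y⁻¹` with coefficients in `ℚ[x_1,…,x_n]`. -/
abbrev Lau (n : ℕ) : Type := LaurentSeries (R n)

/-- The generalized binomial coefficient `C(p,k) = p(p−1)⋯(p−k+1)/k!` for `p : ℤ`, `k : ℕ`. -/
def binomZ (p : ℤ) (k : ℕ) : ℚ := (∏ i ∈ Finset.range k, ((p : ℚ) - i)) / (Nat.factorial k)

/-- The expansion of `(y + c)^m = Σ_{k≥0} C(m,k) c^k y^{m−k}` as a Laurent series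
in `t = y⁻¹` (for `m ≥ 0` this is the usual binomial expansion of the polynomial). -/
def yExpAdd {n : ℕ} (c : R n) (m : ℤ) : Lau n :=
  (HahnSeries.single (-m) (1 : R n)) *
    HahnSeries.ofPowerSeries ℤ (R n)
      (PowerSeries.mk fun k => MvPolynomial.C (binomZ m k) * c^k)

/-- The expansion of `(±y + c)^m`, where the sign is `+` if `σ = true` and `−` otherwise;
it is computed as `(±1)^m (y ± c)^m`. -/
def LExp {n : ℕ} (σ : Bool) (c : R n) (m : ℤ) : Lau n :=
  (if σ then 1 else if Even m then 1 else -1 : Lau n) *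
    yExpAdd ((if σ then 1 else -1 : R n) * c) m

open Classical in
/-- The polynomial representing an element of `ℚ(x_1,…,x_n)` lying in `ℚ[x_1,…,x_n]`
(junk value `0` otherwise). -/
def polyOf {n : ℕ} (f : K n) : R n :=
  if h : ∃ p : R n, algebraMap (R n) (K n) p = f then h.choose else 0

/-- `±y` as a Laurent series in `t = y⁻¹`. -/
def yLau (n : ℕ) (σ : Bool) : Lau n :=
  (if σ then 1 else -1 : Lau n) * HahnSeries.single (-1 : ℤ) (1 : R n)

/-- The expansion of `F_g(±y, x_I)` as a Laurent series in `t = y⁻¹` with coefficients in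
`ℚ[x_1,…,x_n]`: for `(g,|I|+1) = (0,1)` it is `(±y)^{-2} = y^{-2}`, for `(g,|I|+1) = (0,2)`
it is `1/(±y + x_i) = Σ_{k≥0} (−1)^k x_i^k (±y)^{−k−1}`, and otherwise it is obtained by
substituting `±y` and the variables of `I` into the polynomial `F_g`. -/
def FExp {n : ℕ} (σ : Bool) (g : ℕ) (I : Finset (Fin n)) : Lau n :=
  if g = 0 ∧ I.card = 0 then HahnSeries.single (2 : ℤ) (1 : R n)
  else if g = 0 ∧ I.card = 1 then LExp σ (∑ i ∈ I, X i) (-1)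
  else
    MvPolynomial.eval₂ ((HahnSeries.C).comp (algebraMap ℚ (R n)))
      (Fin.cons (yLau n σ)
        (fun i : Fin I.card => HahnSeries.C (X ((I.orderIsoOfFin rfl) i : Fin n))))
      (polyOf (Fnpt (I.card + 1) g))

/-- `L_g^{a,b}(y, x_1,…,x_n) = Σ_{g'=0}^{g} Σ_{I⊔J={1,…,n}} (y+Σ_I x)^a (−y+Σ_J x)^b
F_{g'}(y,x_I) F_{g−g'}(−y,x_J)` as a Laurent series in `t = y⁻¹`. -/
def LL (g n : ℕ) (a b : ℤ) : Lau n :=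
  ∑ gp ∈ Finset.range (g+1), ∑ I : Finset (Fin n),
    LExp true (∑ i ∈ I, X i) a * LExp false (∑ i ∈ Iᶜ, X i) b *
      FExp true gp I * FExp false (g - gp) Iᶜ

/-- The coefficient of `y^k Π_j x_j^{d_j}` in a Laurent series in `t = y⁻¹` with coefficients
in `ℚ[x_1,…,x_n]`. -/
def coeffL {n : ℕ} (f : Lau n) (k : ℤ) (d : Fin n → ℕ) : ℚ :=
  MvPolynomial.coeff (Finsupp.equivFunOnFinite.symm d) (f.coeff (-k))

/-- The index of the variable `z_i` among the `a + b + n` variables `z, w, x`. -/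
def zIdx (a b n : ℕ) (i : Fin a) : Fin (a+b+n) := ⟨i.1, by have := i.2; omega⟩

/-- The index of the variable `w_i` among the `a + b + n` variables `z, w, x`. -/
def wIdx (a b n : ℕ) (i : Fin b) : Fin (a+b+n) := ⟨a + i.1, by have := i.2; omega⟩

/-- The index of the variable `x_i` among the `a + b + n` variables `z, w, x`. -/
def xIdx (a b n : ℕ) (i : Fin n) : Fin (a+b+n) := ⟨a + b + i.1, by have := i.2; omega⟩

/-- `L_g(y; z_1,…,z_a; w_1,…,w_b; x_1,…,x_n)
 = Σ_{g'=0}^{g} Σ_{I⊔J={1,…,n}} F_{g'}(y, z, x_I) F_{g−g'}(−y, w, x_J)`,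
as a Laurent series in `t = y⁻¹` with coefficients in `ℚ[z,w,x]`. -/
def LLm (g n a b : ℕ) : Lau (a+b+n) :=
  ∑ gp ∈ Finset.range (g+1), ∑ I : Finset (Fin n),
    FExp true gp ((univ.image (zIdx a b n)) ∪ I.image (xIdx a b n)) *
    FExp false (g - gp) ((univ.image (wIdx a b n)) ∪ Iᶜ.image (xIdx a b n))

/-- The exponent vector of the monomial `Π z_j^{r_j} Π w_j^{s_j} Π x_j^{d_j}`. -/
def expVec (a b n : ℕ) (r : Fin a → ℕ) (s : Fin b → ℕ) (d : Fin n → ℕ) :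
    Fin (a+b+n) → ℕ :=
  fun v =>
    if h : v.1 < a then r ⟨v.1, h⟩
    else if h2 : v.1 < a + b then s ⟨v.1 - a, by omega⟩
    else d ⟨v.1 - (a+b), by have := v.2; omega⟩


lemma Gf_fuel : ∀ (n fuel : ℕ), n ≤ fuel → ∀ g, Gf fuel n g = Gf n n g := by
  intro n
  induction n using Nat.strong_induction_on with
  | _ n ih =>
    rcases n with _ | _ | m
    · intro fuel _ g; cases fuel <;> rfl
    · intro fuel _ g; cases fuel <;> cases g <;> rfl
    · intro fuel hf g
      obtain ⟨f, rfl⟩ : ∃ f, fuel = f + 1 := ⟨fuel - 1, by omega⟩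
      have hkey : ∀ (f' : ℕ), m + 1 ≤ f' → ∀ (I : Finset (Fin (m+2))), I ≠ univ → ∀ r,
          Gf f' I.card r = Gf I.card I.card r := by
        intro f' hf' I hI r
        have hc : I.card < m + 2 := by
          have := Finset.card_lt_iff_ne_univ I |>.2 hI
          simpa using this
        exact ih I.card hc f' (by omega) r
      show Gf (f+1) (m+2) g = Gf (m+1+1) (m+2) g
      simp only [Gf]
      apply Finset.sum_congr rfl
      intro s _
      refine congrArg (· * Dlt (m+2) ^ s) (congrArg (_ * ·) (congrArg ((2 * SX (m+2))⁻¹ * ·) ?_))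
      apply Finset.sum_congr rfl
      intro I _
      by_cases hI : I ≠ ∅ ∧ I ≠ univ
      · simp only [if_pos hI]
        congr 1
        apply Finset.sum_congr rfl
        intro r' _
        have hIc : Iᶜ ≠ univ := by
          simpa [Finset.compl_eq_univ_iff] using hI.1
        rw [hkey f (by omega) I hI.2, hkey (m+1) le_rfl I hI.2,
            hkey f (by omega) Iᶜ hIc, hkey (m+1) le_rfl Iᶜ hIc]
      · simp [hI]
/-- The coefficient in the `G` recursion. -/
def cQ (n h s : ℕ) : ℚ :=
  (Nat.doubleFactorial (2*(h-s)+n-3) : ℚ) / (4^s * (Nat.doubleFactorial (2*h+n-1) : ℚ))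

lemma inner_eq (m r f : ℕ) (hf : m+1 ≤ f) :
    (∑ I : Finset (Fin (m+2)),
      if I ≠ ∅ ∧ I ≠ univ then
        (algebraMap (R (m+2)) (K (m+2)) (∑ i ∈ I, X i))^2 *
        (algebraMap (R (m+2)) (K (m+2)) (∑ i ∈ Iᶜ, X i))^2 *
        ∑ r' ∈ Finset.range (r+1),
          emb I (Gf f I.card r') * emb Iᶜ (Gf f Iᶜ.card (r - r'))
      else 0)
    = ∑ I : Finset (Fin (m+2)),
      if I ≠ ∅ ∧ I ≠ univ then
        (algebraMap (R (m+2)) (K (m+2)) (∑ i ∈ I, X i))^2 *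
        (algebraMap (R (m+2)) (K (m+2)) (∑ i ∈ Iᶜ, X i))^2 *
        ∑ r' ∈ Finset.range (r+1),
          emb I (Gnpt I.card r') * emb Iᶜ (Gnpt Iᶜ.card (r - r'))
      else 0 := by
  apply Finset.sum_congr rfl
  intro I _
  by_cases hI : I ≠ ∅ ∧ I ≠ univ
  · simp only [if_pos hI]
    congr 1
    apply Finset.sum_congr rfl
    intro r' _
    have hIu : I.card ≤ m + 1 := by
      have := Finset.card_lt_iff_ne_univ I |>.2 hI.2
      simp at this; omega
    have hIc : Iᶜ ≠ univ := by simpa [Finset.compl_eq_univ_iff] using hI.1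
    have hIcu : Iᶜ.card ≤ m + 1 := by
      have := Finset.card_lt_iff_ne_univ Iᶜ |>.2 hIc
      simp at this; omega
    rw [Gf_fuel I.card f (by omega), Gf_fuel Iᶜ.card f (by omega)]
    rfl
  · simp [hI]

lemma Gnpt_eq (m g : ℕ) :
    Gnpt (m+2) g = ∑ s ∈ Finset.range (g+1),
      ((cQ (m+2) g s : ℚ) : K (m+2)) * Ppoly (m+2) (g-s) * (Dlt (m+2))^s := by
  show Gf (m+1+1) (m+2) g = _
  simp only [Gf, Ppoly]
  apply Finset.sum_congr rfl
  intro s _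
  rw [inner_eq m (g-s) (m+1) le_rfl]
  simp only [cQ]
  push_cast
  ring

lemma dfac_ne (k : ℕ) : (Nat.doubleFactorial k : ℚ) ≠ 0 := by
  exact_mod_cast (Nat.doubleFactorial_pos k).ne'

lemma dfact_step (m h : ℕ) :
    Nat.doubleFactorial (2*h+(m+2)-1) = (2*h+(m+2)-1) * Nat.doubleFactorial (2*h+(m+2)-3) := by
  rcases Nat.eq_zero_or_pos (2*h+m) with hz | hp
  · obtain ⟨h0, m0⟩ : h = 0 ∧ m = 0 := by omega
    subst h0; subst m0; rfl
  · have e1 : 2*h+(m+2)-1 = (2*h+(m+2)-3)+2 := by omega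
    rw [e1, Nat.doubleFactorial_add_two]

lemma cQ_zero (m h : ℕ) : ((2*h+(m+2)-1 : ℕ) : ℚ) * cQ (m+2) h 0 = 1 := by
  simp only [cQ, Nat.sub_zero, pow_zero, one_mul]
  rw [dfact_step]
  have h1 := dfac_ne (2*h+(m+2)-3)
  have h2 : ((2*h+(m+2)-1 : ℕ) : ℚ) ≠ 0 := by
    have : 0 < 2*h+(m+2)-1 := by omega
    exact_mod_cast this.ne'
  push_cast
  field_simp

lemma cQ_succ (m h s : ℕ) :
    ((2*(h+1)+(m+2)-1 : ℕ) : ℚ) * cQ (m+2) (h+1) (s+1) = cQ (m+2) h s / 4 := by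
  have e0 : (h+1)-(s+1) = h - s := by omega
  have e1 : 2*(h+1)+(m+2)-1 = (2*h+(m+2)-1)+2 := by omega
  simp only [cQ, e0, e1, Nat.doubleFactorial_add_two]
  have h1 := dfac_ne (2*h+(m+2)-1)
  have h2 : ((2*h+(m+2)-1+2 : ℕ) : ℚ) ≠ 0 := by positivity
  have h3 : (4 : ℚ)^s ≠ 0 := by positivity
  push_cast
  field_simp
  ring

lemma G_star (m h : ℕ) :
    ((2*h+(m+2)-1 : ℕ) : K (m+2)) * Gnpt (m+2) h
      = Dlt (m+2)/4 * (if h = 0 then 0 else Gnpt (m+2) (h-1)) + Ppoly (m+2) h := by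
  have hN : ((2*h+(m+2)-1 : ℕ) : K (m+2)) = (((2*h+(m+2)-1 : ℕ) : ℚ) : K (m+2)) := by
    push_cast; ring
  rw [Gnpt_eq, Finset.mul_sum, Finset.sum_range_succ', hN]
  have t0 : (((2*h+(m+2)-1 : ℕ) : ℚ) : K (m+2)) *
      (((cQ (m+2) h 0 : ℚ) : K (m+2)) * Ppoly (m+2) (h-0) * Dlt (m+2)^0) = Ppoly (m+2) h := by
    rw [← mul_assoc, ← mul_assoc, ← Rat.cast_mul, cQ_zero]
    simp
  rw [t0]
  congr 1
  rcases h with _ | h'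
  · simp
  · rw [if_neg (Nat.succ_ne_zero h'), Gnpt_eq]
    simp only [Nat.add_sub_cancel]
    rw [Finset.mul_sum]
    apply Finset.sum_congr rfl
    intro s hs
    have key : (((2*(h'+1)+(m+2)-1 : ℕ) : ℚ) : K (m+2)) * ((cQ (m+2) (h'+1) (s+1) : ℚ) : K (m+2))
        = ((cQ (m+2) h' s : ℚ) : K (m+2)) / 4 := by
      rw [← Rat.cast_mul, cQ_succ]
      push_cast; ring
    have e : h'+1-(s+1) = h'-s := by omega
    rw [e]
    calc (((2*(h'+1)+(m+2)-1 : ℕ) : ℚ) : K (m+2)) *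
          (((cQ (m+2) (h'+1) (s+1) : ℚ) : K (m+2)) * Ppoly (m+2) (h'-s) * Dlt (m+2)^(s+1))
        = ((((2*(h'+1)+(m+2)-1 : ℕ) : ℚ) : K (m+2)) * ((cQ (m+2) (h'+1) (s+1) : ℚ) : K (m+2))) *
          (Ppoly (m+2) (h'-s) * Dlt (m+2)^(s+1)) := by ring
      _ = (((cQ (m+2) h' s : ℚ) : K (m+2)) / 4) * (Ppoly (m+2) (h'-s) * Dlt (m+2)^(s+1)) := by
          rw [key]
      _ = Dlt (m+2)/4 * (((cQ (m+2) h' s : ℚ) : K (m+2)) * Ppoly (m+2) (h'-s) * Dlt (m+2)^s) := by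
          ring
lemma SX_cube (n : ℕ) : (SX n)^3/12 = Dlt n/4 + SX3 n/12 := by
  simp only [Dlt]; ring

lemma L1 (m g : ℕ) :
    ((2*g+(m+2)-1 : ℕ) : K (m+2)) * Fnpt (m+2) g
      = (SX (m+2))^3/12 * (if g = 0 then 0 else Fnpt (m+2) (g-1))
        + ∑ d ∈ Finset.range (g+1),
            ((1 / (Nat.factorial d : ℚ)) : K (m+2)) * (SX3 (m+2)/24)^d * Ppoly (m+2) (g-d) := by
  rw [Fnpt, Finset.mul_sum]
  have step : ∀ d ∈ Finset.range (g+1),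
      ((2*g+(m+2)-1 : ℕ) : K (m+2)) *
        (((1 / (Nat.factorial d : ℚ)) : K (m+2)) * (SX3 (m+2)/24)^d * Gnpt (m+2) (g-d))
      = (((1 / (Nat.factorial d : ℚ)) : K (m+2)) * (SX3 (m+2)/24)^d *
          (Dlt (m+2)/4 * (if g-d = 0 then 0 else Gnpt (m+2) (g-d-1)))
        + ((1 / (Nat.factorial d : ℚ)) : K (m+2)) * (SX3 (m+2)/24)^d * Ppoly (m+2) (g-d))
        + ((2*d : ℕ) : K (m+2)) *
          (((1 / (Nat.factorial d : ℚ)) : K (m+2)) * (SX3 (m+2)/24)^d * Gnpt (m+2) (g-d)) := by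
    intro d hd
    have hdg : d ≤ g := by simpa [Nat.lt_succ_iff] using hd
    have hsplit : ((2*g+(m+2)-1 : ℕ) : K (m+2))
        = ((2*(g-d)+(m+2)-1 : ℕ) : K (m+2)) + ((2*d : ℕ) : K (m+2)) := by
      rw [← Nat.cast_add]
      congr 1
      omega
    rw [hsplit, add_mul]
    congr 1
    have hst := G_star m (g-d)
    calc ((2*(g-d)+(m+2)-1 : ℕ) : K (m+2)) *
          (((1 / (Nat.factorial d : ℚ)) : K (m+2)) * (SX3 (m+2)/24)^d * Gnpt (m+2) (g-d))
        = ((1 / (Nat.factorial d : ℚ)) : K (m+2)) * (SX3 (m+2)/24)^d *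
            (((2*(g-d)+(m+2)-1 : ℕ) : K (m+2)) * Gnpt (m+2) (g-d)) := by ring
      _ = _ := by rw [hst]; ring
  rw [Finset.sum_congr rfl step]
  simp only [Finset.sum_add_distrib]
  have key : (∑ d ∈ Finset.range (g+1),
        ((1 / (Nat.factorial d : ℚ)) : K (m+2)) * (SX3 (m+2)/24)^d *
          (Dlt (m+2)/4 * (if g-d = 0 then 0 else Gnpt (m+2) (g-d-1))))
      + ∑ d ∈ Finset.range (g+1),
          ((2*d : ℕ) : K (m+2)) *
            (((1 / (Nat.factorial d : ℚ)) : K (m+2)) * (SX3 (m+2)/24)^d * Gnpt (m+2) (g-d))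
      = (SX (m+2))^3/12 * (if g = 0 then 0 else Fnpt (m+2) (g-1)) := by
    rcases g with _ | g'
    · simp
    · rw [if_neg (Nat.succ_ne_zero g'), SX_cube, Nat.add_sub_cancel, Fnpt, add_mul]
      congr 1
      · rw [Finset.sum_range_succ]
        simp only [Nat.sub_self, ↓reduceIte, mul_zero, add_zero]
        rw [Finset.mul_sum]
        apply Finset.sum_congr rfl
        intro d hd
        have hdg : d ≤ g' := by simpa [Nat.lt_succ_iff] using hd
        have h1 : g' + 1 - d ≠ 0 := by omega
        have h2 : g' + 1 - d - 1 = g' - d := by omega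
        rw [if_neg h1, h2]
        ring
      · rw [Finset.sum_range_succ']
        simp only [Nat.cast_zero, mul_zero, Nat.cast_ofNat, zero_mul, add_zero]
        rw [Finset.mul_sum]
        apply Finset.sum_congr rfl
        intro d hd
        have e1 : g' + 1 - (d + 1) = g' - d := by omega
        rw [e1]
        have hq : ((2*(d+1) : ℕ) : ℚ) * (1 / (Nat.factorial (d+1) : ℚ))
            = (1 / (Nat.factorial d : ℚ)) * 2 := by
          have hf : (Nat.factorial d : ℚ) ≠ 0 := by
            exact_mod_cast (Nat.factorial_pos d).ne'
          rw [Nat.factorial_succ]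
          push_cast
          field_simp
        have hqK := congrArg (fun q : ℚ => (q : K (m+2))) hq
        push_cast at hqK
        calc ((2*(d+1) : ℕ) : K (m+2)) *
              (((1 / (Nat.factorial (d+1) : ℚ)) : K (m+2)) * (SX3 (m+2)/24)^(d+1) * Gnpt (m+2) (g'-d))
            = (((2*(d+1) : ℕ) : K (m+2)) * ((1 / (Nat.factorial (d+1) : ℚ)) : K (m+2))) *
              ((SX3 (m+2)/24)^(d+1) * Gnpt (m+2) (g'-d)) := by ring
          _ = ((((1 / (Nat.factorial d : ℚ)) : K (m+2)) * 2)) *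
              ((SX3 (m+2)/24)^(d+1) * Gnpt (m+2) (g'-d)) := by
              push_cast
              linear_combination ((SX3 (m+2)/24)^(d+1) * Gnpt (m+2) (g'-d)) * hqK
          _ = SX3 (m+2)/12 *
              (((1 / (Nat.factorial d : ℚ)) : K (m+2)) * (SX3 (m+2)/24)^d * Gnpt (m+2) (g'-d)) := by
              rw [pow_succ]; ring
  rw [add_assoc, add_comm (∑ d ∈ Finset.range (g+1),
      ((1 / (Nat.factorial d : ℚ)) : K (m+2)) * (SX3 (m+2)/24)^d * Ppoly (m+2) (g-d))]
  rw [← add_assoc, key]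
lemma emb_algebraMap {n : ℕ} (I : Finset (Fin n)) (p : R I.card) :
    emb I (algebraMap (R I.card) (K I.card) p)
      = algebraMap (R n) (K n)
          (MvPolynomial.rename (fun i : Fin I.card => ((I.orderIsoOfFin rfl) i : Fin n)) p) := by
  rw [emb, IsFractionRing.lift_algebraMap]
  rfl

lemma emb_SX3 {n : ℕ} (I : Finset (Fin n)) :
    emb I (SX3 I.card) = algebraMap (R n) (K n) (∑ i ∈ I, (X i)^3) := by
  rw [SX3, emb_algebraMap]
  congr 1
  rw [map_sum]
  simp only [map_pow, MvPolynomial.rename_X]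
  rw [← Finset.sum_coe_sort I (fun i => (X i : R n)^3)]
  exact Equiv.sum_comp (I.orderIsoOfFin rfl).toEquiv (fun i => (X (i : Fin n) : R n)^3)

lemma emb_Fnpt {n : ℕ} (I : Finset (Fin n)) (gp : ℕ) :
    emb I (Fnpt I.card gp)
      = ∑ d ∈ Finset.range (gp+1),
          ((1 / (Nat.factorial d : ℚ)) : K n) *
            (algebraMap (R n) (K n) (∑ i ∈ I, (X i)^3) / 24)^d *
            emb I (Gnpt I.card (gp-d)) := by
  rw [Fnpt, map_sum]
  apply Finset.sum_congr rfl
  intro d _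
  rw [map_mul, map_mul, map_pow, map_div₀, map_div₀, map_one, emb_SX3, map_ofNat]
  rw [map_ratCast (emb I)]

lemma conv4 {A : Type*} [CommRing A] (v1 v2 G1 G2 : ℕ → A) (g : ℕ) :
    ∑ gp ∈ Finset.range (g+1),
      (∑ d ∈ Finset.range (gp+1), v1 d * G1 (gp-d)) *
      (∑ d ∈ Finset.range ((g-gp)+1), v2 d * G2 (g-gp-d))
    = ∑ d ∈ Finset.range (g+1),
        (∑ k ∈ Finset.range (d+1), v1 k * v2 (d-k)) *
        (∑ r ∈ Finset.range ((g-d)+1), G1 r * G2 (g-d-r)) := by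
  have h1 : ∀ (p q : ℕ → A) (k : ℕ),
      ∑ i ∈ Finset.range (k+1), p i * q (k-i)
        = PowerSeries.coeff k (PowerSeries.mk p * PowerSeries.mk q) := by
    intro p q k
    rw [PowerSeries.coeff_mul, Finset.Nat.sum_antidiagonal_eq_sum_range_succ_mk]
    simp
  have h2 : ∀ (φ ψ : PowerSeries A) (k : ℕ),
      PowerSeries.coeff k (φ * ψ)
        = ∑ i ∈ Finset.range (k+1), PowerSeries.coeff i φ * PowerSeries.coeff (k-i) ψ := by
    intro φ ψ k
    rw [PowerSeries.coeff_mul, Finset.Nat.sum_antidiagonal_eq_sum_range_succ_mk]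
  calc ∑ gp ∈ Finset.range (g+1),
        (∑ d ∈ Finset.range (gp+1), v1 d * G1 (gp-d)) *
        (∑ d ∈ Finset.range ((g-gp)+1), v2 d * G2 (g-gp-d))
      = ∑ gp ∈ Finset.range (g+1),
          PowerSeries.coeff gp (PowerSeries.mk v1 * PowerSeries.mk G1) *
          PowerSeries.coeff (g-gp) (PowerSeries.mk v2 * PowerSeries.mk G2) := by
        apply Finset.sum_congr rfl
        intro gp _
        rw [h1, h1]
    _ = PowerSeries.coeff g
          ((PowerSeries.mk v1 * PowerSeries.mk G1) * (PowerSeries.mk v2 * PowerSeries.mk G2)) := by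
        rw [h2]
    _ = PowerSeries.coeff g
          ((PowerSeries.mk v1 * PowerSeries.mk v2) * (PowerSeries.mk G1 * PowerSeries.mk G2)) := by
        rw [mul_mul_mul_comm]
    _ = ∑ d ∈ Finset.range (g+1),
          PowerSeries.coeff d (PowerSeries.mk v1 * PowerSeries.mk v2) *
          PowerSeries.coeff (g-d) (PowerSeries.mk G1 * PowerSeries.mk G2) := by
        rw [h2]
    _ = _ := by
        apply Finset.sum_congr rfl
        intro d _
        rw [h1, h1]

lemma binomK {n : ℕ} (A B : K n) (d : ℕ) :
    ∑ k ∈ Finset.range (d+1),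
      (((1 / (Nat.factorial k : ℚ)) : K n) * (A/24)^k) *
      (((1 / (Nat.factorial (d-k) : ℚ)) : K n) * (B/24)^(d-k))
    = ((1 / (Nat.factorial d : ℚ)) : K n) * ((A+B)/24)^d := by
  rw [add_div, add_pow, Finset.mul_sum]
  apply Finset.sum_congr rfl
  intro k hk
  have hkd : k ≤ d := by simpa [Nat.lt_succ_iff] using hk
  have hq : (1 / (Nat.factorial d : ℚ)) * (d.choose k : ℚ)
      = (1 / (Nat.factorial k : ℚ)) * (1 / (Nat.factorial (d-k) : ℚ)) := by
    rw [Nat.cast_choose ℚ hkd]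
    have h1 : (Nat.factorial d : ℚ) ≠ 0 := by exact_mod_cast (Nat.factorial_pos d).ne'
    have h2 : (Nat.factorial k : ℚ) ≠ 0 := by exact_mod_cast (Nat.factorial_pos k).ne'
    have h3 : (Nat.factorial (d-k) : ℚ) ≠ 0 := by exact_mod_cast (Nat.factorial_pos (d-k)).ne'
    field_simp
  have hqK := congrArg (fun q : ℚ => (q : K n)) hq
  push_cast at hqK
  push_cast
  linear_combination (-((A/24)^k * (B/24)^(d-k))) * hqK
lemma inner_conv {n : ℕ} (g : ℕ) (I : Finset (Fin n)) :
    (∑ gp ∈ Finset.range (g+1), emb I (Fnpt I.card gp) * emb Iᶜ (Fnpt Iᶜ.card (g-gp)))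
    = ∑ d ∈ Finset.range (g+1),
        ((1 / (Nat.factorial d : ℚ)) : K n) * (SX3 n/24)^d *
        ∑ r' ∈ Finset.range ((g-d)+1),
          emb I (Gnpt I.card r') * emb Iᶜ (Gnpt Iᶜ.card ((g-d) - r')) := by
  have hAB : algebraMap (R n) (K n) (∑ i ∈ I, (X i)^3)
      + algebraMap (R n) (K n) (∑ i ∈ Iᶜ, (X i)^3) = SX3 n := by
    rw [SX3, ← map_add]
    congr 1
    exact Finset.sum_add_sum_compl I _
  have hc := conv4
    (fun d => ((1 / (Nat.factorial d : ℚ)) : K n) *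
      (algebraMap (R n) (K n) (∑ i ∈ I, (X i)^3)/24)^d)
    (fun d => ((1 / (Nat.factorial d : ℚ)) : K n) *
      (algebraMap (R n) (K n) (∑ i ∈ Iᶜ, (X i)^3)/24)^d)
    (fun r => emb I (Gnpt I.card r)) (fun r => emb Iᶜ (Gnpt Iᶜ.card r)) g
  calc (∑ gp ∈ Finset.range (g+1), emb I (Fnpt I.card gp) * emb Iᶜ (Fnpt Iᶜ.card (g-gp)))
      = ∑ gp ∈ Finset.range (g+1),
          (∑ d ∈ Finset.range (gp+1),
            ((1 / (Nat.factorial d : ℚ)) : K n) *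
              (algebraMap (R n) (K n) (∑ i ∈ I, (X i)^3)/24)^d * emb I (Gnpt I.card (gp-d))) *
          (∑ d ∈ Finset.range ((g-gp)+1),
            ((1 / (Nat.factorial d : ℚ)) : K n) *
              (algebraMap (R n) (K n) (∑ i ∈ Iᶜ, (X i)^3)/24)^d *
                emb Iᶜ (Gnpt Iᶜ.card (g-gp-d))) := by
        apply Finset.sum_congr rfl
        intro gp _
        rw [emb_Fnpt, emb_Fnpt]
    _ = ∑ d ∈ Finset.range (g+1),
          (∑ k ∈ Finset.range (d+1),
            (((1 / (Nat.factorial k : ℚ)) : K n) *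
              (algebraMap (R n) (K n) (∑ i ∈ I, (X i)^3)/24)^k) *
            (((1 / (Nat.factorial (d-k) : ℚ)) : K n) *
              (algebraMap (R n) (K n) (∑ i ∈ Iᶜ, (X i)^3)/24)^(d-k))) *
          (∑ r ∈ Finset.range ((g-d)+1),
            emb I (Gnpt I.card r) * emb Iᶜ (Gnpt Iᶜ.card (g-d-r))) := hc
    _ = _ := by
        apply Finset.sum_congr rfl
        intro d _
        rw [binomK, hAB]

lemma R1 (n g : ℕ) :
    (∑ gp ∈ Finset.range (g+1), ∑ I : Finset (Fin n),
      (if I ≠ ∅ ∧ I ≠ univ then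
        (algebraMap (R n) (K n) (∑ i ∈ I, X i))^2 *
        (algebraMap (R n) (K n) (∑ i ∈ Iᶜ, X i))^2 *
        (emb I (Fnpt I.card gp) * emb Iᶜ (Fnpt Iᶜ.card (g - gp)))
       else 0))
    = ∑ d ∈ Finset.range (g+1),
        ((1 / (Nat.factorial d : ℚ)) : K n) * (SX3 n/24)^d *
        ∑ I : Finset (Fin n),
          (if I ≠ ∅ ∧ I ≠ univ then
            (algebraMap (R n) (K n) (∑ i ∈ I, X i))^2 *
            (algebraMap (R n) (K n) (∑ i ∈ Iᶜ, X i))^2 *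
            ∑ r' ∈ Finset.range ((g-d)+1),
              emb I (Gnpt I.card r') * emb Iᶜ (Gnpt Iᶜ.card ((g-d) - r'))
          else 0) := by
  have rhs_eq : ∀ d : ℕ,
      ((1 / (Nat.factorial d : ℚ)) : K n) * (SX3 n/24)^d *
        ∑ I : Finset (Fin n),
          (if I ≠ ∅ ∧ I ≠ univ then
            (algebraMap (R n) (K n) (∑ i ∈ I, X i))^2 *
            (algebraMap (R n) (K n) (∑ i ∈ Iᶜ, X i))^2 *
            ∑ r' ∈ Finset.range ((g-d)+1),
              emb I (Gnpt I.card r') * emb Iᶜ (Gnpt Iᶜ.card ((g-d) - r'))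
          else 0)
      = ∑ I : Finset (Fin n),
          (if I ≠ ∅ ∧ I ≠ univ then
            (algebraMap (R n) (K n) (∑ i ∈ I, X i))^2 *
            (algebraMap (R n) (K n) (∑ i ∈ Iᶜ, X i))^2 *
            (((1 / (Nat.factorial d : ℚ)) : K n) * (SX3 n/24)^d *
            ∑ r' ∈ Finset.range ((g-d)+1),
              emb I (Gnpt I.card r') * emb Iᶜ (Gnpt Iᶜ.card ((g-d) - r')))
          else 0) := by
    intro d
    rw [Finset.mul_sum]
    apply Finset.sum_congr rfl
    intro I _
    by_cases hI : I ≠ ∅ ∧ I ≠ univ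
    · simp only [if_pos hI]
      ring
    · simp [hI]
  conv_lhs => rw [Finset.sum_comm]
  conv_rhs => rw [Finset.sum_congr rfl (fun d _ => rhs_eq d), Finset.sum_comm]
  apply Finset.sum_congr rfl
  intro I _
  by_cases hI : I ≠ ∅ ∧ I ≠ univ
  · simp only [if_pos hI]
    rw [← Finset.mul_sum, ← Finset.mul_sum, inner_conv g I]
  · simp [hI]

/-- The recursion formula for the `n`-point functions (`n ≥ 2`, with `F_{−1} := 0`):
`(2g+n−1) F_g(x) = ((Σx_j)³/12) F_{g−1}(x)
 + (1/(2Σx_j)) Σ_{g'} Σ_{I⊔J, I,J≠∅} (Σ_I x)²(Σ_J x)² F_{g'}(x_I) F_{g−g'}(x_J)`. -/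
theorem npoint_recursion (g n : ℕ) (hn : 2 ≤ n) :
    ((2*g+n-1 : ℕ) : K n) * Fnpt n g
      = (SX n)^3 / 12 * (if g = 0 then 0 else Fnpt n (g-1))
        + (2 * SX n)⁻¹ *
            ∑ gp ∈ Finset.range (g+1), ∑ I : Finset (Fin n),
              (if I ≠ ∅ ∧ I ≠ univ then
                (algebraMap (R n) (K n) (∑ i ∈ I, X i))^2 *
                (algebraMap (R n) (K n) (∑ i ∈ Iᶜ, X i))^2 *
                (emb I (Fnpt I.card gp) * emb Iᶜ (Fnpt Iᶜ.card (g - gp)))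
               else 0) := by
  obtain ⟨m, rfl⟩ : ∃ m, n = m + 2 := ⟨n - 2, by omega⟩
  rw [R1 (m+2) g, L1 m g]
  congr 1
  rw [Finset.mul_sum]
  apply Finset.sum_congr rfl
  intro d _
  rw [Ppoly]
  ring

end
end

section
/- Let g ≥ 0 and a, b ∈ ℤ. For every integer k ≥ 2g−3+a+b, [L_g^{a,b}(y,x)]_{y^k} = 0; that is, in the one-variable case n = 1, the coefficient of y^k x^d in L_g^{a,b}(y,x) vanishes for every integer d ≥ 0. -/
open MvPolynomial Finset

noncomputable section

namespace Aux
open HahnSeries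

lemma binomZ_zero (p : ℤ) : binomZ p 0 = 1 := by simp [binomZ]

lemma prod_shift (q : ℚ) (k : ℕ) :
    ∏ i ∈ Finset.range (k+1), (q+1-i) =
      (∏ i ∈ Finset.range (k+1), (q-i)) + (k+1) * ∏ i ∈ Finset.range k, (q-i) := by
  rw [Finset.prod_range_succ', Finset.prod_range_succ]
  have h1 : ∀ i ∈ Finset.range k, (q+1-((i+1:ℕ):ℚ)) = q - i := by
    intro i _; push_cast; ring
  rw [Finset.prod_congr rfl h1]
  push_cast; ring

lemma binomZ_pascal (p : ℤ) (k : ℕ) :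
    binomZ (p+1) (k+1) = binomZ p (k+1) + binomZ p k := by
  unfold binomZ
  have hfs : (((k+1).factorial : ℚ)) = (k+1) * (k).factorial := by
    rw [Nat.factorial_succ]; push_cast; ring
  have key := prod_shift (p : ℚ) k
  have hc : ∀ i ∈ Finset.range (k+1), (((p+1:ℤ)):ℚ) - i = (p:ℚ)+1-i := by
    intro i _; push_cast; ring
  rw [Finset.prod_congr rfl hc, key]
  have hk' : ((k).factorial : ℚ) ≠ 0 := by positivity
  field_simp [hfs]
  rw [hfs]; ring

/-- The binomial power series `Σ_k C(m,k) c^k t^k`. -/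
def PSb {n : ℕ} (m : ℤ) (c : R n) : PowerSeries (R n) :=
  PowerSeries.mk fun k => MvPolynomial.C (binomZ m k) * c^k

lemma PSb_succ {n : ℕ} (m : ℤ) (c : R n) :
    PSb (m+1) c = PSb m c * (1 + PowerSeries.X * PowerSeries.C c) := by
  ext j
  rw [mul_add, mul_one, map_add]
  cases j with
  | zero =>
    simp [PSb, binomZ_zero]
  | succ k =>
    have h1 : (PowerSeries.coeff (k+1)) (PSb m c * (PowerSeries.X * PowerSeries.C c))
        = (PowerSeries.coeff k) (PSb m c) * c := by
      rw [show PSb m c * (PowerSeries.X * PowerSeries.C c)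
            = PSb m c * PowerSeries.X * PowerSeries.C c by ring,
        PowerSeries.coeff_mul_C, PowerSeries.coeff_succ_mul_X]
    rw [h1]
    simp only [PSb, PowerSeries.coeff_mk, binomZ_pascal, map_add, add_mul]
    ring

lemma yExpAdd_def {n : ℕ} (c : R n) (m : ℤ) :
    yExpAdd c m = single (-m) 1 * ofPowerSeries ℤ (R n) (PSb m c) := rfl

lemma yExpAdd_succ {n : ℕ} (c : R n) (m : ℤ) :
    yExpAdd c m * (single (-1) (1 : R n) + HahnSeries.C c) = yExpAdd c (m+1) := by
  have s1 : single (-(m+1)) (1:R n) * single 1 (1:R n) = single (-m) 1 := by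
    rw [single_mul_single, show (-(m+1)+1 : ℤ) = -m by ring, mul_one]
  have s2 : single (-m) (1:R n) * single (-1) (1:R n) = single (-(m+1)) 1 := by
    rw [single_mul_single, show (-m + -1 : ℤ) = -(m+1) by ring, mul_one]
  rw [yExpAdd_def, yExpAdd_def, PSb_succ, map_mul, map_add,
    (ofPowerSeries ℤ (R n)).map_one, map_mul, ofPowerSeries_X, ofPowerSeries_C]
  linear_combination (ofPowerSeries ℤ (R n) (PSb m c)) * s2
    - (ofPowerSeries ℤ (R n) (PSb m c)) * HahnSeries.C c * s1

lemma PSb_zero {n : ℕ} (c : R n) : PSb 0 c = 1 := by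
  ext j
  cases j with
  | zero => simp [PSb, binomZ_zero]
  | succ k =>
    have h0 : binomZ 0 (k+1) = 0 := by
      unfold binomZ
      rw [Finset.prod_eq_zero (Finset.mem_range.mpr (Nat.succ_pos k))]
      · simp
      · simp
    simp only [PSb, PowerSeries.coeff_mk, h0, map_zero, zero_mul, PowerSeries.coeff_one]
    rw [if_neg (by omega)]

lemma yExpAdd_zero {n : ℕ} (c : R n) : yExpAdd c 0 = 1 := by
  rw [yExpAdd_def, PSb_zero, (ofPowerSeries ℤ (R n)).map_one, mul_one, neg_zero,
    single_zero_one]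

lemma LExp_zero {n : ℕ} (σ : Bool) (c : R n) : LExp σ c 0 = 1 := by
  cases σ <;> simp [LExp, yExpAdd_zero]

lemma LExp_succ {n : ℕ} (σ : Bool) (c : R n) (m : ℤ) :
    LExp σ c m * (yLau n σ + HahnSeries.C c) = LExp σ c (m+1) := by
  cases σ
  · have key := yExpAdd_succ (-c) m
    have hL : LExp false c m = (if Even m then (1:Lau n) else -1) * yExpAdd (-c) m := by
      simp [LExp]
    have hL' : LExp false c (m+1) =
        (if Even (m+1) then (1:Lau n) else -1) * yExpAdd (-c) (m+1) := by
      simp [LExp]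
    have hY : yLau n false + HahnSeries.C c = -(single (-1) 1 + HahnSeries.C (-c)) := by
      rw [map_neg]; simp [yLau]; ring
    rw [hL, hL', hY, ← key]
    by_cases he : Even m
    · rw [if_pos he, if_neg (by simp [Int.even_add_one, he])]; ring
    · rw [if_neg he, if_pos (Int.even_add_one.mpr he)]; ring
  · have key := yExpAdd_succ c m
    simp only [LExp, yLau, if_true, one_mul]
    simpa using key

end Aux

namespace Aux
open HahnSeries

/-- The unit `±y + c` of the Laurent series ring. -/
def LUnit {n : ℕ} (σ : Bool) (c : R n) : (Lau n)ˣ :=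
  Units.mkOfMulEqOne (yLau n σ + HahnSeries.C c) (LExp σ c (-1))
    (by rw [mul_comm]
        have h := LExp_succ σ c (-1)
        rw [show (-1 + 1 : ℤ) = 0 from by norm_num] at h
        rw [h, LExp_zero])

lemma LUnit_val {n : ℕ} (σ : Bool) (c : R n) :
    (LUnit σ c : Lau n) = yLau n σ + HahnSeries.C c := rfl

lemma LExp_zpow {n : ℕ} (σ : Bool) (c : R n) (m : ℤ) :
    LExp σ c m = ((LUnit σ c ^ m : (Lau n)ˣ) : Lau n) := by
  induction m using Int.induction_on with
  | zero => rw [LExp_zero]; norm_num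
  | succ k ih =>
    rw [← LExp_succ σ c k, ih, zpow_add_one]
    push_cast
    rw [LUnit_val]
  | pred k ih =>
    have h := LExp_succ σ c (-(k+1))
    rw [show (-((k:ℤ)+1)+1 : ℤ) = -k by ring] at h
    have h2 : LExp σ c (-((k:ℤ)+1)) * ((LUnit σ c : Lau n) * ((LUnit σ c)⁻¹ : (Lau n)ˣ))
        = LExp σ c (-(k:ℤ)) * ((LUnit σ c)⁻¹ : (Lau n)ˣ) := by
      rw [← mul_assoc, LUnit_val] at *
      rw [h]
    rw [Units.mul_inv, mul_one] at h2
    rw [show (-(k:ℤ) - 1) = (-((k:ℤ)+1) : ℤ) by ring, h2, ih,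
        show (-((k:ℤ)+1) : ℤ) = -(k:ℤ) + -1 by ring, zpow_add]
    push_cast
    rw [zpow_neg_one]

lemma LExp_add {n : ℕ} (σ : Bool) (c : R n) (m₁ m₂ : ℤ) :
    LExp σ c m₁ * LExp σ c m₂ = LExp σ c (m₁ + m₂) := by
  rw [LExp_zpow, LExp_zpow, LExp_zpow, zpow_add]
  push_cast
  ring

end Aux

namespace Aux

lemma Gf_one_zero (fuel : ℕ) : Gf fuel 1 0 = (algebraMap (R 1) (K 1) (X 0))^(-2:ℤ) := by
  cases fuel <;> rw [Gf]

lemma Gf_one_succ (fuel r : ℕ) : Gf fuel 1 (r+1) = 0 := by cases fuel <;> rw [Gf]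

lemma polyOf_algebraMap {n : ℕ} (p : R n) :
    polyOf (algebraMap (R n) (K n) p) = p := by
  unfold polyOf
  have hex : ∃ q : R n, algebraMap (R n) (K n) q = algebraMap (R n) (K n) p := ⟨p, rfl⟩
  rw [dif_pos hex]
  exact IsFractionRing.injective (R n) (K n) hex.choose_spec

lemma emb_alg {n : ℕ} (I : Finset (Fin n)) (p : R I.card) :
    emb I (algebraMap (R I.card) (K I.card) p) = embRH I p :=
  IsFractionRing.lift_algebraMap _ _

lemma embRH_X {n : ℕ} (I : Finset (Fin n)) (j : Fin I.card) :
    embRH I (X j) = algebraMap (R n) (K n) (X ((I.orderIsoOfFin rfl j : Fin n))) := by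
  simp [embRH]

end Aux

namespace Aux
open HahnSeries

/-- `1/(24^d d!)`. -/
def βQ (d : ℕ) : ℚ := 1 / (24^d * (Nat.factorial d : ℚ))

/-- `1/(4^h (2h+1)!!)`. -/
def γQ (h : ℕ) : ℚ := 1 / (4^h * (Nat.doubleFactorial (2*h+1) : ℚ))

lemma βQ_ne_zero (d : ℕ) : βQ d ≠ 0 := by
  unfold βQ
  positivity

lemma βQ_zero : βQ 0 = 1 := by simp [βQ]

lemma γQ_zero : γQ 0 = 1 := by simp [γQ, Nat.doubleFactorial]

lemma algK_inj {n : ℕ} : Function.Injective (algebraMap (R n) (K n)) :=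
  IsFractionRing.injective (R n) (K n)

lemma algK_X_ne_zero {n : ℕ} (i : Fin n) : algebraMap (R n) (K n) (X i) ≠ 0 := by
  intro h
  have hX : (X i : R n) ≠ 0 := MvPolynomial.X_ne_zero i
  exact hX (algK_inj (by rw [h, map_zero]))

lemma algC_ratCast {n : ℕ} (q : ℚ) :
    algebraMap (R n) (K n) (MvPolynomial.C q) = (q : K n) :=
  eq_ratCast ((algebraMap (R n) (K n)).comp (MvPolynomial.C : ℚ →+* R n)) q

lemma Gnpt_one_zero : Gnpt 1 0 = (algebraMap (R 1) (K 1) (X 0))^(-2:ℤ) := Gf_one_zero 1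

lemma emb_singleton_G {n : ℕ} (i : Fin n) (r' : ℕ) :
    emb ({i} : Finset (Fin n)) (Gf 1 ({i} : Finset (Fin n)).card r') =
      if r' = 0 then (algebraMap (R n) (K n) (X i))^(-2:ℤ) else 0 := by
  cases r' with
  | zero =>
    rw [if_pos rfl]
    have hm := (({i} : Finset (Fin n)).orderIsoOfFin rfl ⟨0, by simp⟩).2
    rw [Finset.mem_singleton] at hm
    have hgoal : emb ({i} : Finset (Fin n))
        (algebraMap (R ({i} : Finset (Fin n)).card) (K ({i} : Finset (Fin n)).card)
          (X ⟨0, by simp⟩))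
        = algebraMap (R n) (K n) (X i) := by
      rw [emb_alg, embRH_X, hm]
    have h1 : Gf 1 ({i} : Finset (Fin n)).card 0 = (algebraMap (R ({i} : Finset (Fin n)).card)
        (K ({i} : Finset (Fin n)).card) (X ⟨0, by simp⟩))^(-2:ℤ) :=
      Gf_one_zero 1
    rw [h1, map_zpow₀]
    exact congrArg (fun t => t ^ (-2:ℤ)) hgoal
  | succ r =>
    rw [if_neg (Nat.succ_ne_zero r)]
    have h1 : Gf 1 ({i} : Finset (Fin n)).card (r+1) = 0 := Gf_one_succ 1 r
    rw [h1, map_zero]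

lemma sum_finset_fin2 {M : Type*} [AddCommMonoid M] (f : Finset (Fin 2) → M) :
    ∑ I : Finset (Fin 2), f I = f ∅ + (f {0} + (f {1} + f {0,1})) := by
  have h : (Finset.univ : Finset (Finset (Fin 2))) =
      {∅, {0}, {1}, {0,1}} := by decide
  rw [h, Finset.sum_insert (by decide), Finset.sum_insert (by decide),
    Finset.sum_insert (by decide), Finset.sum_singleton]

lemma sum_finset_fin1 {M : Type*} [AddCommMonoid M] (f : Finset (Fin 1) → M) :
    ∑ I : Finset (Fin 1), f I = f ∅ + f Finset.univ := by
  have h : (Finset.univ : Finset (Finset (Fin 1))) = {∅, Finset.univ} := by decide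
  rw [h, Finset.sum_insert (by decide), Finset.sum_singleton]

lemma Dlt_two : Dlt 2 = algebraMap (R 2) (K 2) (X 0 * X 1 * (X 0 + X 1)) := by
  unfold Dlt SX SX3
  rw [Fin.sum_univ_two, Fin.sum_univ_two]
  rw [div_eq_iff (by norm_num : (3 : K 2) ≠ 0)]
  rw [show (3 : K 2) = algebraMap (R 2) (K 2) 3 from (map_ofNat _ 3).symm]
  rw [← map_pow, ← map_sub, ← map_mul]
  congr 1
  ring

lemma SX_two : SX 2 = algebraMap (R 2) (K 2) (X 0 + X 1) := by
  unfold SX; rw [Fin.sum_univ_two]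

lemma SX_two_ne_zero : SX 2 ≠ 0 := by
  rw [SX_two, Ne, map_eq_zero_iff _ algK_inj]
  intro h
  have := congrArg (MvPolynomial.coeff (Finsupp.single 0 1)) h
  simp [MvPolynomial.coeff_X', Finsupp.single_eq_single_iff] at this

lemma SX3_two : SX3 2 = algebraMap (R 2) (K 2) (X 0^3 + X 1^3) := by
  unfold SX3; rw [Fin.sum_univ_two]

lemma Gf_two (g : ℕ) :
    Gf 2 2 g = ((γQ g : ℚ) : K 2) * (SX 2)⁻¹ * (Dlt 2)^g := by
  show Gf (1+1) (0+2) g = _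
  rw [Gf]
  have hinner : ∀ r : ℕ,
      (∑ I : Finset (Fin 2),
        if I ≠ ∅ ∧ I ≠ Finset.univ then
          (algebraMap (R 2) (K 2) (∑ i ∈ I, X i))^2 *
          (algebraMap (R 2) (K 2) (∑ i ∈ Iᶜ, X i))^2 *
          ∑ r' ∈ Finset.range (r+1),
            emb I (Gf 1 I.card r') * emb Iᶜ (Gf 1 Iᶜ.card (r - r'))
        else 0) = if r = 0 then 2 else 0 := by
    intro r
    rw [sum_finset_fin2]
    rw [if_neg (by simp), if_pos (⟨by decide, by decide⟩ : ({0} : Finset (Fin 2)) ≠ ∅ ∧ ({0} : Finset (Fin 2)) ≠ Finset.univ),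
      if_pos (⟨by decide, by decide⟩ : ({1} : Finset (Fin 2)) ≠ ∅ ∧ ({1} : Finset (Fin 2)) ≠ Finset.univ),
      if_neg (by simp [show ({0,1} : Finset (Fin 2)) = Finset.univ by decide])]
    rw [show ({0} : Finset (Fin 2))ᶜ = {1} by decide, show ({1} : Finset (Fin 2))ᶜ = {0} by decide]
    have key : ∀ i j : Fin 2, i ≠ j →
        (algebraMap (R 2) (K 2) (∑ i' ∈ ({i} : Finset (Fin 2)), X i'))^2 *
        (algebraMap (R 2) (K 2) (∑ i' ∈ ({j} : Finset (Fin 2)), X i'))^2 *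
        (∑ r' ∈ Finset.range (r+1),
          emb ({i} : Finset (Fin 2)) (Gf 1 ({i} : Finset (Fin 2)).card r') *
          emb ({j} : Finset (Fin 2)) (Gf 1 ({j} : Finset (Fin 2)).card (r - r')))
        = if r = 0 then 1 else 0 := by
      intro i j _
      rw [Finset.sum_singleton, Finset.sum_singleton]
      have hsum : (∑ r' ∈ Finset.range (r+1),
          emb ({i} : Finset (Fin 2)) (Gf 1 ({i} : Finset (Fin 2)).card r') *
          emb ({j} : Finset (Fin 2)) (Gf 1 ({j} : Finset (Fin 2)).card (r - r')))
          = if r = 0 then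
              (algebraMap (R 2) (K 2) (X i))^(-2:ℤ) * (algebraMap (R 2) (K 2) (X j))^(-2:ℤ)
            else 0 := by
        rw [Finset.sum_congr rfl (fun r' _ => by rw [emb_singleton_G, emb_singleton_G])]
        by_cases hr : r = 0
        · subst hr; simp
        · rw [if_neg hr]
          apply Finset.sum_eq_zero
          intro r' hr'
          by_cases h0 : r' = 0
          · subst h0
            rw [if_pos rfl, if_neg (by omega), mul_zero]
          · rw [if_neg h0, zero_mul]
      rw [hsum]
      by_cases hr : r = 0
      · subst hr
        rw [if_pos rfl, if_pos rfl]
        have hz : ∀ u : K 2, u ≠ 0 → u^2 * u^(-2:ℤ) = 1 := by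
          intro u hu
          rw [show (-2:ℤ) = -((2:ℕ):ℤ) by norm_num, zpow_neg, zpow_natCast,
            mul_inv_cancel₀ (pow_ne_zero _ hu)]
        have h1 := hz _ (algK_X_ne_zero (n := 2) i)
        have h2 := hz _ (algK_X_ne_zero (n := 2) j)
        linear_combination ((algebraMap (R 2) (K 2) (X j))^2 *
          ((algebraMap (R 2) (K 2) (X j))^(-2:ℤ))) * h1 + h2
      · rw [if_neg hr, if_neg hr, mul_zero]
    rw [key 0 1 (by decide), key 1 0 (by decide)]
    by_cases hr : r = 0
    · simp only [hr, if_pos]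
      norm_num
    · simp [hr]
  rw [Finset.sum_congr rfl (fun s _ => by rw [hinner (g - s)])]
  rw [Finset.sum_eq_single_of_mem g (Finset.self_mem_range_succ g)
    (fun s hs hne => by
      rw [if_neg (by have := Finset.mem_range.mp hs; omega)]
      simp)]
  rw [if_pos (by omega)]
  have h2 : (2 * SX (0+2))⁻¹ * 2 = (SX 2)⁻¹ := by
    rw [mul_inv]
    have := SX_two_ne_zero
    show (2:K 2)⁻¹ * (SX 2)⁻¹ * 2 = (SX 2)⁻¹
    field_simp
  rw [h2]
  have hc : (((Nat.doubleFactorial (2*(g-g)+(0+2)-3) : ℚ)) : K (0+2)) /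
      (4^g * (((Nat.doubleFactorial (2*g+(0+2)-1) : ℚ)) : K (0+2))) = ((γQ g : ℚ) : K 2) := by
    rw [show 2*(g-g)+(0+2)-3 = 0 by omega, show 2*g+(0+2)-1 = 2*g+1 by omega]
    unfold γQ
    push_cast [Nat.doubleFactorial]
    norm_num
  rw [show Dlt (0+2) = Dlt 2 from rfl, ← hc]

lemma Gnpt_two (g : ℕ) :
    Gnpt 2 g = ((γQ g : ℚ) : K 2) * (SX 2)⁻¹ * (Dlt 2)^g := Gf_two g

end Aux

namespace Aux
open HahnSeries

lemma Fnpt_one (h : ℕ) (hh : 1 ≤ h) :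
    Fnpt 1 h = algebraMap (R 1) (K 1) (MvPolynomial.C (βQ h) * X 0 ^ (3*h-2)) := by
  unfold Fnpt
  rw [Finset.sum_eq_single_of_mem h (Finset.self_mem_range_succ h)
    (fun d hd hne => by
      have hd' : d < h + 1 := Finset.mem_range.mp hd
      obtain ⟨r, hr⟩ := Nat.exists_eq_succ_of_ne_zero (show h - d ≠ 0 by omega)
      rw [show Gnpt 1 (h-d) = Gf 1 1 (h - d) from rfl, hr, Gf_one_succ, mul_zero])]
  rw [Nat.sub_self, show Gnpt 1 0 = Gf 1 1 0 from rfl, Gf_one_zero]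
  have hx := algK_X_ne_zero (n := 1) 0
  rw [map_mul, algC_ratCast, map_pow,
    ← zpow_natCast (algebraMap (R 1) (K 1) (X 0)) (3*h-2),
    show ((3*h-2 : ℕ) : ℤ) = ((3*h : ℕ) : ℤ) + (-2:ℤ) by omega,
    zpow_add₀ hx, zpow_natCast]
  have hsx3 : SX3 1 = algebraMap (R 1) (K 1) (X 0 ^ 3) := by
    unfold SX3; rw [Fin.sum_univ_one]
  rw [hsx3, div_pow, ← map_pow, ← pow_mul]
  unfold βQ
  push_cast
  have h24 : ((24:ℚ) : K 1)^h ≠ 0 := by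
    apply pow_ne_zero; intro hz
    have : ((24:ℚ) : K 1) = ((0 : ℚ) : K 1) := by rw [hz]; norm_num
    norm_num at this
  have hfac : ((Nat.factorial h : ℚ) : K 1) ≠ 0 := by
    intro hz
    have : ((Nat.factorial h : ℚ) : K 1) = ((0:ℚ) : K 1) := by rw [hz]; norm_num
    rw [show ((Nat.factorial h : ℚ) : K 1) = ((Nat.factorial h : ℕ) : K 1) by push_cast; ring] at hz
    rw [Nat.cast_eq_zero] at hz
    exact (Nat.factorial_ne_zero h) hz
  field_simp

/-- `q_g = Σ_d C(β_d γ_{g-d}) (x₀³+x₁³)^d (x₀x₁(x₀+x₁))^{g-d}`. -/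
def qPoly (g : ℕ) : R 2 :=
  ∑ d ∈ Finset.range (g+1),
    MvPolynomial.C (βQ d * γQ (g-d)) * (X 0^3 + X 1^3)^d * (X 0 * X 1 * (X 0 + X 1))^(g-d)

lemma Fnpt_two_mul_SX (g : ℕ) :
    Fnpt 2 g * SX 2 = algebraMap (R 2) (K 2) (qPoly g) := by
  unfold Fnpt qPoly
  rw [Finset.sum_mul, map_sum]
  apply Finset.sum_congr rfl
  intro d _
  rw [Gnpt_two, SX3_two, Dlt_two]
  have hS := SX_two_ne_zero
  have hred : ∀ u v w : K 2, u * (v * (SX 2)⁻¹ * w) * SX 2 = u * v * w := by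
    intro u v w; field_simp
  rw [hred]
  simp only [map_mul, map_pow, algC_ratCast]
  rw [div_pow]
  have hfac : ((Nat.factorial d : ℚ) : K 2) ≠ 0 := by
    rw [show ((Nat.factorial d : ℚ) : K 2) = ((Nat.factorial d : ℕ) : K 2) by push_cast; ring,
      Ne, Nat.cast_eq_zero]
    exact Nat.factorial_ne_zero d
  push_cast [βQ]
  field_simp

lemma doubleFactorial_pos' (m : ℕ) : 0 < Nat.doubleFactorial m := Nat.doubleFactorial_pos m

lemma dvd_qPoly (g : ℕ) (hg : 1 ≤ g) : (X 0 + X 1 : R 2) ∣ qPoly g := by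
  unfold qPoly
  apply Finset.dvd_sum
  intro d hd
  by_cases hdg : d = g
  · subst hdg
    have h3 : (X 0 + X 1 : R 2) ∣ (X 0^3 + X 1^3) :=
      ⟨X 0^2 - X 0 * X 1 + X 1^2, by ring⟩
    exact ((dvd_pow h3 (by omega)).mul_left _).mul_right _
  · have hd' : d < g + 1 := Finset.mem_range.mp hd
    exact (dvd_pow (dvd_mul_left _ _) (by omega)).mul_left _

lemma Fnpt_two_poly (g : ℕ) (hg : 1 ≤ g) :
    algebraMap (R 2) (K 2) (polyOf (Fnpt 2 g)) = Fnpt 2 g := by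
  obtain ⟨p, hp⟩ := dvd_qPoly g hg
  have hF : Fnpt 2 g = algebraMap (R 2) (K 2) p := by
    apply mul_right_cancel₀ SX_two_ne_zero
    rw [Fnpt_two_mul_SX, hp, map_mul, ← SX_two]
    ring
  rw [hF, polyOf_algebraMap]

lemma polyOf_Fnpt_two (g : ℕ) (hg : 1 ≤ g) :
    polyOf (Fnpt 2 g) * (X 0 + X 1) = qPoly g := by
  apply algK_inj
  rw [map_mul, Fnpt_two_poly g hg, ← SX_two, Fnpt_two_mul_SX]

end Aux

namespace Aux
open HahnSeries

lemma PSb_c0 {n : ℕ} (m : ℤ) : PSb m (0 : R n) = 1 := by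
  ext j
  cases j with
  | zero => simp [PSb, binomZ_zero]
  | succ k =>
    simp only [PSb, PowerSeries.coeff_mk, zero_pow (Nat.succ_ne_zero k), mul_zero,
      PowerSeries.coeff_one]
    rw [if_neg (by omega)]

lemma yExpAdd_c0 {n : ℕ} (m : ℤ) : yExpAdd (0 : R n) m = single (-m) 1 := by
  rw [yExpAdd_def, PSb_c0, (ofPowerSeries ℤ (R n)).map_one, mul_one]

lemma LExp_true_c0 {n : ℕ} (m : ℤ) : LExp true (0 : R n) m = single (-m) 1 := by
  simp [LExp, yExpAdd_c0]

lemma LExp_false_c0 {n : ℕ} (m : ℤ) :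
    LExp false (0 : R n) m = (if Even m then 1 else -1) * single (-m) 1 := by
  simp only [LExp, yExpAdd_c0, Bool.false_eq_true, if_false, neg_zero,
    show ((-1 : R n) * 0) = 0 by ring]

lemma LUnit_zero_val {n : ℕ} (σ : Bool) :
    ((LUnit σ (0 : R n) : (Lau n)ˣ) : Lau n) = yLau n σ := by
  rw [LUnit_val, map_zero, add_zero]

/-- Substitution `x₀ ↦ ±y` for one-point functions. -/
def v1 (σ : Bool) : Fin 1 → Lau 1 := fun _ => yLau 1 σ

/-- Substitution `x₀ ↦ ±y`, `x₁ ↦ x` for two-point functions. -/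
def vv (σ : Bool) : Fin 2 → Lau 1 := Fin.cons (yLau 1 σ) (fun _ => HahnSeries.C (X 0))

lemma vv_zero (σ : Bool) : vv σ 0 = yLau 1 σ := rfl
lemma vv_one (σ : Bool) : vv σ 1 = HahnSeries.C (X 0 : R 1) := rfl

lemma FExp_empty (σ : Bool) (h : ℕ) :
    FExp σ h (∅ : Finset (Fin 1)) =
      HahnSeries.C (MvPolynomial.C (βQ h) : R 1) *
        ((LUnit σ (0 : R 1) ^ (3*(h:ℤ) - 2) : (Lau 1)ˣ) : Lau 1) := by
  cases h with
  | zero =>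
    rw [show FExp σ 0 (∅ : Finset (Fin 1)) = single 2 1 from by
      unfold FExp; rw [if_pos ⟨rfl, Finset.card_empty⟩]]
    rw [βQ_zero, MvPolynomial.C_1, RingHom.map_one HahnSeries.C, one_mul]
    rw [show (3*((0:ℕ):ℤ) - 2) = -2 by norm_num, ← LExp_zpow]
    cases σ
    · rw [LExp_false_c0, if_pos (by decide)]
      norm_num
    · rw [LExp_true_c0]
      norm_num
  | succ h' =>
    unfold FExp
    rw [if_neg (by simp), if_neg (by simp)]
    have hv : (Fin.cons (yLau 1 σ)
        (fun i : Fin (∅ : Finset (Fin 1)).card =>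
          HahnSeries.C (X (((∅ : Finset (Fin 1)).orderIsoOfFin rfl i : Fin 1)))) :
          Fin ((∅ : Finset (Fin 1)).card + 1) → Lau 1) = v1 σ := by
      funext i
      refine Fin.cases ?_ (fun j => ?_) i
      · rfl
      · exact Fin.elim0 j
    rw [hv]
    have main : MvPolynomial.eval₂ (HahnSeries.C.comp (algebraMap ℚ (R 1))) (v1 σ)
        (polyOf (Fnpt 1 (h'+1))) =
        HahnSeries.C (MvPolynomial.C (βQ (h'+1)) : R 1) *
          ((LUnit σ (0 : R 1) ^ (3*((h'+1:ℕ):ℤ) - 2) : (Lau 1)ˣ) : Lau 1) := by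
      rw [Fnpt_one (h'+1) (by omega), polyOf_algebraMap, MvPolynomial.eval₂_mul,
        MvPolynomial.eval₂_C, MvPolynomial.eval₂_pow, MvPolynomial.eval₂_X]
      rw [show HahnSeries.C.comp (algebraMap ℚ (R 1)) (βQ (h'+1)) =
          HahnSeries.C (MvPolynomial.C (βQ (h'+1)) : R 1) from by
        rw [RingHom.comp_apply, MvPolynomial.algebraMap_eq]]
      rw [show v1 σ 0 = ((LUnit σ (0 : R 1) : (Lau 1)ˣ) : Lau 1) from (LUnit_zero_val σ).symm,
        ← Units.val_pow_eq_pow_val,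
        show (3*(((h'+1:ℕ)):ℤ) - 2) = ((3*(h'+1)-2 : ℕ) : ℤ) by push_cast; omega,
        zpow_natCast]
    exact main

lemma FExp_univ (σ : Bool) (g : ℕ) :
    FExp σ g (Finset.univ : Finset (Fin 1)) =
      ∑ d ∈ Finset.range (g+1),
        HahnSeries.C (MvPolynomial.C (βQ d * γQ (g-d)) : R 1) *
        ((yLau 1 σ)^3 + (HahnSeries.C (X 0 : R 1))^3)^d *
        (yLau 1 σ * HahnSeries.C (X 0 : R 1))^(g-d) *
        ((LUnit σ (X 0 : R 1) ^ ((g:ℤ) - d - 1) : (Lau 1)ˣ) : Lau 1) := by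
  cases g with
  | zero =>
    rw [show FExp σ 0 (Finset.univ : Finset (Fin 1))
        = LExp σ (∑ i ∈ Finset.univ, X i) (-1) from by
      unfold FExp; rw [if_neg (by simp), if_pos ⟨rfl, by simp⟩]]
    rw [Fin.sum_univ_one, Finset.sum_range_one]
    rw [βQ_zero, γQ_zero, mul_one, MvPolynomial.C_1, RingHom.map_one HahnSeries.C,
      Nat.sub_self, pow_zero, pow_zero, one_mul, one_mul, one_mul, LExp_zpow]
    norm_num
  | succ g' =>
    unfold FExp
    rw [if_neg (by simp), if_neg (by simp)]
    have hv : (Fin.cons (yLau 1 σ)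
        (fun i : Fin (Finset.univ : Finset (Fin 1)).card =>
          HahnSeries.C (X (((Finset.univ : Finset (Fin 1)).orderIsoOfFin rfl i : Fin 1)))) :
          Fin ((Finset.univ : Finset (Fin 1)).card + 1) → Lau 1) = vv σ := by
      funext i
      refine Fin.cases ?_ (fun j => ?_) i
      · rfl
      · show HahnSeries.C (X _) = vv σ j.succ
        rw [show vv σ j.succ = HahnSeries.C (X 0 : R 1) from by
          rfl]
        congr 1
        exact congrArg X (Fin.eq_zero _)
    rw [hv]
    have main : MvPolynomial.eval₂ (HahnSeries.C.comp (algebraMap ℚ (R 1))) (vv σ)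
        (polyOf (Fnpt 2 (g'+1))) =
        ∑ d ∈ Finset.range (g'+1+1),
          HahnSeries.C (MvPolynomial.C (βQ d * γQ (g'+1-d)) : R 1) *
          ((yLau 1 σ)^3 + (HahnSeries.C (X 0 : R 1))^3)^d *
          (yLau 1 σ * HahnSeries.C (X 0 : R 1))^(g'+1-d) *
          ((LUnit σ (X 0 : R 1) ^ (((g'+1:ℕ):ℤ) - d - 1) : (Lau 1)ˣ) : Lau 1) := by
      apply (LUnit σ (X 0 : R 1)).isUnit.mul_right_cancel
      have hXsum : MvPolynomial.eval₂ (HahnSeries.C.comp (algebraMap ℚ (R 1))) (vv σ)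
          ((X 0 + X 1 : R 2)) = ((LUnit σ (X 0 : R 1) : (Lau 1)ˣ) : Lau 1) := by
        rw [MvPolynomial.eval₂_add, MvPolynomial.eval₂_X, MvPolynomial.eval₂_X,
          vv_zero, vv_one, LUnit_val]
      rw [← hXsum, ← MvPolynomial.eval₂_mul, polyOf_Fnpt_two (g'+1) (by omega)]
      unfold qPoly
      rw [MvPolynomial.eval₂_sum, Finset.sum_mul]
      apply Finset.sum_congr rfl
      intro d hd
      have hdle : d ≤ g' + 1 := by have := Finset.mem_range.mp hd; omega
      rw [MvPolynomial.eval₂_mul, MvPolynomial.eval₂_mul, MvPolynomial.eval₂_C,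
        MvPolynomial.eval₂_pow, MvPolynomial.eval₂_pow, MvPolynomial.eval₂_add,
        MvPolynomial.eval₂_pow, MvPolynomial.eval₂_pow,
        MvPolynomial.eval₂_mul, MvPolynomial.eval₂_mul, MvPolynomial.eval₂_add,
        MvPolynomial.eval₂_X, MvPolynomial.eval₂_X, vv_zero, vv_one]
      rw [show HahnSeries.C.comp (algebraMap ℚ (R 1)) (βQ d * γQ (g'+1-d)) =
          HahnSeries.C (MvPolynomial.C (βQ d * γQ (g'+1-d)) : R 1) from by
        rw [RingHom.comp_apply, MvPolynomial.algebraMap_eq]]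
      rw [show yLau 1 σ + HahnSeries.C (X 0 : R 1)
          = ((LUnit σ (X 0 : R 1) : (Lau 1)ˣ) : Lau 1) from (LUnit_val σ _).symm]
      rw [mul_pow (yLau 1 σ) (HahnSeries.C (X 0 : R 1))]
      have hzp : ((LUnit σ (X 0 : R 1) ^ (((g'+1:ℕ):ℤ) - d - 1) : (Lau 1)ˣ) : Lau 1) *
          ((LUnit σ (X 0 : R 1) : (Lau 1)ˣ) : Lau 1)
          = ((LUnit σ (X 0 : R 1) : (Lau 1)ˣ) : Lau 1) ^ ((g'+1-d : ℕ)) := by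
        rw [← Units.val_mul, ← zpow_add_one,
          show ((((g'+1:ℕ)):ℤ) - d - 1 + 1) = (((g'+1-d : ℕ)):ℤ) by push_cast [hdle]; omega,
          zpow_natCast, Units.val_pow_eq_pow_val]
      rw [mul_assoc, mul_assoc, mul_assoc, hzp]
      rw [← mul_pow (yLau 1 σ) (HahnSeries.C (X 0 : R 1))]
      ring
    exact main

end Aux

namespace Aux
open HahnSeries

/-- Constants embedded in `Lau 1`. -/
def κκ (q : ℚ) : Lau 1 := HahnSeries.C (MvPolynomial.C q : R 1)

lemma κκ_mul (p q : ℚ) : κκ (p * q) = κκ p * κκ q := by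
  unfold κκ; rw [map_mul, map_mul]

lemma Uval_mul (σ : Bool) (c : R 1) (m₁ m₂ : ℤ) :
    ((LUnit σ c ^ m₁ : (Lau 1)ˣ) : Lau 1) * ((LUnit σ c ^ m₂ : (Lau 1)ˣ) : Lau 1)
      = ((LUnit σ c ^ (m₁+m₂) : (Lau 1)ˣ) : Lau 1) := by
  rw [← Units.val_mul, ← zpow_add]

lemma yLau_cube_pow (σ : Bool) (gp : ℕ) :
    ((LUnit σ (0:R 1) ^ (3*(gp:ℤ)) : (Lau 1)ˣ) : Lau 1) = ((yLau 1 σ)^3)^gp := by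
  rw [zpow_mul, zpow_natCast, Units.val_pow_eq_pow_val,
    show (3:ℤ) = ((3:ℕ):ℤ) by norm_num, zpow_natCast, Units.val_pow_eq_pow_val, LUnit_zero_val]

lemma yLau_false_neg : yLau 1 false = - yLau 1 true := by
  unfold yLau
  simp only [Bool.false_eq_true, if_false, if_true]
  ring

lemma yLau_cube_add : (yLau 1 false)^3 + (yLau 1 true)^3 = 0 := by
  rw [yLau_false_neg]; ring

/-- Triangular reindexing. -/
lemma tri {M : Type*} [AddCommMonoid M] (g : ℕ) (F : ℕ → ℕ → M) :
    ∑ gp ∈ Finset.range (g+1), ∑ d ∈ Finset.range (g - gp + 1), F gp d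
      = ∑ h ∈ Finset.range (g+1), ∑ d ∈ Finset.range (g - h + 1), F (g - h - d) d := by
  rw [Finset.sum_sigma', Finset.sum_sigma']
  refine Finset.sum_nbij' (fun p => ⟨g - p.1 - p.2, p.2⟩) (fun p => ⟨g - p.1 - p.2, p.2⟩)
    ?_ ?_ ?_ ?_ ?_
  · rintro ⟨p1, p2⟩ hp
    simp only [Finset.mem_sigma, Finset.mem_range] at hp ⊢
    omega
  · rintro ⟨p1, p2⟩ hp
    simp only [Finset.mem_sigma, Finset.mem_range] at hp ⊢
    omega
  · rintro ⟨p1, p2⟩ hp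
    simp only [Finset.mem_sigma, Finset.mem_range] at hp
    dsimp only
    rw [show g - (g - p1 - p2) - p2 = p1 by omega]
  · rintro ⟨p1, p2⟩ hp
    simp only [Finset.mem_sigma, Finset.mem_range] at hp
    dsimp only
    rw [show g - (g - p1 - p2) - p2 = p1 by omega]
  · rintro ⟨p1, p2⟩ hp
    simp only [Finset.mem_sigma, Finset.mem_range] at hp
    dsimp only
    rw [show g - (g - p1 - p2) - p2 = p1 by omega]

/-- Exponential convolution. -/
lemma beta_conv (D : ℕ) (A B : Lau 1) :
    ∑ d ∈ Finset.range (D+1), κκ (βQ d * βQ (D-d)) * A^d * B^(D-d)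
      = κκ (βQ D) * (A+B)^D := by
  rw [add_pow, Finset.mul_sum]
  apply Finset.sum_congr rfl
  intro d hd
  have hdle : d ≤ D := by have := Finset.mem_range.mp hd; omega
  have hq : βQ d * βQ (D-d) = βQ D * (D.choose d : ℚ) := by
    rw [Nat.cast_choose ℚ hdle]
    unfold βQ
    have h1 : (Nat.factorial d : ℚ) ≠ 0 := by positivity
    have h2 : (Nat.factorial (D-d) : ℚ) ≠ 0 := by positivity
    have h3 : (Nat.factorial D : ℚ) ≠ 0 := by positivity
    have h24 : (24:ℚ)^d * 24^(D-d) = 24^D := by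
      rw [← _root_.pow_add]
      congr 1
      omega
    have h48 : (24:ℚ)^(D*2) = 24^D * 24^D := by
      rw [pow_mul]; ring
    field_simp
    linear_combination (-1 : ℚ) * h24
  rw [hq, κκ_mul]
  have hχ : ((D.choose d : ℕ) : Lau 1) = κκ ((D.choose d : ℚ)) := by
    unfold κκ
    rw [show ((D.choose d : ℕ) : ℚ) = ((D.choose d : ℕ) : ℚ) from rfl,
      map_natCast (MvPolynomial.C : ℚ →+* R 1), map_natCast (HahnSeries.C : R 1 →+* Lau 1)]
  rw [hχ]
  ring

end Aux

namespace Aux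
open HahnSeries

lemma κκ_def (q : ℚ) : HahnSeries.C (MvPolynomial.C q : R 1) = κκ q := rfl

/-- Term of type A after reorganization. -/
def Atm (a b : ℤ) (h' gp d : ℕ) : Lau 1 :=
  (κκ (γQ h') * (yLau 1 false * HahnSeries.C (X 0 : R 1))^h' *
    ((LUnit true (0:R 1) ^ (a-2) : (Lau 1)ˣ) : Lau 1) *
    ((LUnit false (X 0:R 1) ^ (b + (h':ℤ) - 1) : (Lau 1)ˣ) : Lau 1)) *
  (κκ (βQ d) * κκ (βQ gp) * ((yLau 1 false)^3 + (HahnSeries.C (X 0:R 1))^3)^d *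
    ((yLau 1 true)^3)^gp)

/-- Term of type B after reorganization. -/
def Btm (a b : ℤ) (h' q d : ℕ) : Lau 1 :=
  (κκ (γQ h') * (yLau 1 true * HahnSeries.C (X 0 : R 1))^h' *
    ((LUnit false (0:R 1) ^ (b-2) : (Lau 1)ˣ) : Lau 1) *
    ((LUnit true (X 0:R 1) ^ (a + (h':ℤ) - 1) : (Lau 1)ˣ) : Lau 1)) *
  (κκ (βQ d) * κκ (βQ q) * ((yLau 1 true)^3 + (HahnSeries.C (X 0:R 1))^3)^d *
    ((yLau 1 false)^3)^q)

lemma hbodyA (g : ℕ) (a b : ℤ) (gp : ℕ) :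
    LExp true (∑ i ∈ (∅ : Finset (Fin 1)), X i) a *
      LExp false (∑ i ∈ (∅ : Finset (Fin 1))ᶜ, X i) b *
      FExp true gp (∅ : Finset (Fin 1)) * FExp false (g - gp) (∅ : Finset (Fin 1))ᶜ
    = ∑ d ∈ Finset.range ((g-gp)+1), Atm a b (g-gp-d) gp d := by
  rw [Finset.compl_empty, Finset.sum_empty, Fin.sum_univ_one,
    LExp_zpow true 0 a, LExp_zpow false (X 0) b, FExp_empty true gp, FExp_univ false (g-gp),
    κκ_def]
  rw [Finset.mul_sum]
  apply Finset.sum_congr rfl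
  intro d hd
  have hdle : d ≤ g - gp := by have := Finset.mem_range.mp hd; omega
  rw [κκ_def, κκ_mul]
  unfold Atm
  have e1 : ((LUnit true (0:R 1) ^ a : (Lau 1)ˣ) : Lau 1) *
      ((LUnit true (0:R 1) ^ (3*(gp:ℤ)-2) : (Lau 1)ˣ) : Lau 1)
      = ((LUnit true (0:R 1) ^ (a-2) : (Lau 1)ˣ) : Lau 1) * ((yLau 1 true)^3)^gp := by
    rw [Uval_mul, ← yLau_cube_pow true gp, Uval_mul,
      show a - 2 + 3*(gp:ℤ) = a + (3*(gp:ℤ)-2) by ring]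
  have e2 : ((LUnit false (X 0:R 1) ^ b : (Lau 1)ˣ) : Lau 1) *
      ((LUnit false (X 0:R 1) ^ (((g-gp:ℕ):ℤ) - (d:ℤ) - 1) : (Lau 1)ˣ) : Lau 1)
      = ((LUnit false (X 0:R 1) ^ (b + ((g-gp-d:ℕ):ℤ) - 1) : (Lau 1)ˣ) : Lau 1) := by
    rw [Uval_mul, show b + (((g-gp:ℕ):ℤ) - (d:ℤ) - 1) = b + ((g-gp-d:ℕ):ℤ) - 1 by omega]
  set u1 := ((LUnit true (0:R 1) ^ a : (Lau 1)ˣ) : Lau 1)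
  set u2 := ((LUnit true (0:R 1) ^ (3*(gp:ℤ)-2) : (Lau 1)ˣ) : Lau 1)
  set v1 := ((LUnit false (X 0:R 1) ^ b : (Lau 1)ˣ) : Lau 1)
  set v2 := ((LUnit false (X 0:R 1) ^ (((g-gp:ℕ):ℤ) - (d:ℤ) - 1) : (Lau 1)ˣ) : Lau 1)
  set u1' := ((LUnit true (0:R 1) ^ (a-2) : (Lau 1)ˣ) : Lau 1)
  set v2' := ((LUnit false (X 0:R 1) ^ (b + ((g-gp-d:ℕ):ℤ) - 1) : (Lau 1)ˣ) : Lau 1)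
  set Y3 := ((yLau 1 true)^3)^gp
  set S := κκ (βQ gp) * κκ (βQ d) * κκ (γQ (g-gp-d)) *
    ((yLau 1 false)^3 + (HahnSeries.C (X 0:R 1))^3)^d *
    (yLau 1 false * HahnSeries.C (X 0:R 1))^(g-gp-d)
  linear_combination (S * (v1 * v2)) * e1 + (S * (u1' * Y3)) * e2

lemma hbodyB (g : ℕ) (a b : ℤ) (gp : ℕ) :
    LExp true (∑ i ∈ (Finset.univ : Finset (Fin 1)), X i) a *
      LExp false (∑ i ∈ (Finset.univ : Finset (Fin 1))ᶜ, X i) b *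
      FExp true gp (Finset.univ : Finset (Fin 1)) *
      FExp false (g - gp) (Finset.univ : Finset (Fin 1))ᶜ
    = ∑ d ∈ Finset.range (gp+1), Btm a b (gp-d) (g-gp) d := by
  rw [Finset.compl_univ, Finset.sum_empty, Fin.sum_univ_one,
    LExp_zpow true (X 0) a, LExp_zpow false 0 b, FExp_empty false (g-gp), FExp_univ true gp,
    κκ_def]
  rw [Finset.mul_sum, Finset.sum_mul]
  apply Finset.sum_congr rfl
  intro d hd
  have hdle : d ≤ gp := by have := Finset.mem_range.mp hd; omega
  rw [κκ_def, κκ_mul]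
  unfold Btm
  have e1 : ((LUnit false (0:R 1) ^ b : (Lau 1)ˣ) : Lau 1) *
      ((LUnit false (0:R 1) ^ (3*((g-gp:ℕ):ℤ)-2) : (Lau 1)ˣ) : Lau 1)
      = ((LUnit false (0:R 1) ^ (b-2) : (Lau 1)ˣ) : Lau 1) * ((yLau 1 false)^3)^(g-gp) := by
    rw [Uval_mul, ← yLau_cube_pow false (g-gp), Uval_mul,
      show b - 2 + 3*((g-gp:ℕ):ℤ) = b + (3*((g-gp:ℕ):ℤ)-2) by ring]
  have e2 : ((LUnit true (X 0:R 1) ^ a : (Lau 1)ˣ) : Lau 1) *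
      ((LUnit true (X 0:R 1) ^ (((gp:ℕ):ℤ) - (d:ℤ) - 1) : (Lau 1)ˣ) : Lau 1)
      = ((LUnit true (X 0:R 1) ^ (a + ((gp-d:ℕ):ℤ) - 1) : (Lau 1)ˣ) : Lau 1) := by
    rw [Uval_mul, show a + (((gp:ℕ):ℤ) - (d:ℤ) - 1) = a + ((gp-d:ℕ):ℤ) - 1 by omega]
  set u1 := ((LUnit false (0:R 1) ^ b : (Lau 1)ˣ) : Lau 1)
  set u2 := ((LUnit false (0:R 1) ^ (3*((g-gp:ℕ):ℤ)-2) : (Lau 1)ˣ) : Lau 1)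
  set v1 := ((LUnit true (X 0:R 1) ^ a : (Lau 1)ˣ) : Lau 1)
  set v2 := ((LUnit true (X 0:R 1) ^ (((gp:ℕ):ℤ) - (d:ℤ) - 1) : (Lau 1)ˣ) : Lau 1)
  set u1' := ((LUnit false (0:R 1) ^ (b-2) : (Lau 1)ˣ) : Lau 1)
  set v2' := ((LUnit true (X 0:R 1) ^ (a + ((gp-d:ℕ):ℤ) - 1) : (Lau 1)ˣ) : Lau 1)
  set Y3 := ((yLau 1 false)^3)^(g-gp)
  set S := κκ (βQ (g-gp)) * κκ (βQ d) * κκ (γQ (gp-d)) *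
    ((yLau 1 true)^3 + (HahnSeries.C (X 0:R 1))^3)^d *
    (yLau 1 true * HahnSeries.C (X 0:R 1))^(gp-d)
  linear_combination (S * (v1 * v2)) * e1 + (S * (u1' * Y3)) * e2

end Aux

namespace Aux
open HahnSeries

lemma LL_eq (g : ℕ) (a b : ℤ) :
    LL g 1 a b = ∑ h ∈ Finset.range (g+1),
      κκ (βQ (g-h) * γQ h) * (HahnSeries.C (X 0 : R 1))^(3*(g-h)) *
        ((yLau 1 false * HahnSeries.C (X 0 : R 1))^h *
            ((LUnit true (0:R 1) ^ (a-2) : (Lau 1)ˣ) : Lau 1) *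
            ((LUnit false (X 0:R 1) ^ (b+(h:ℤ)-1) : (Lau 1)ˣ) : Lau 1)
          + (yLau 1 true * HahnSeries.C (X 0 : R 1))^h *
            ((LUnit false (0:R 1) ^ (b-2) : (Lau 1)ˣ) : Lau 1) *
            ((LUnit true (X 0:R 1) ^ (a+(h:ℤ)-1) : (Lau 1)ˣ) : Lau 1)) := by
  unfold LL
  have step1 : ∀ gp ∈ Finset.range (g+1),
      (∑ I : Finset (Fin 1),
        LExp true (∑ i ∈ I, X i) a * LExp false (∑ i ∈ Iᶜ, X i) b *
          FExp true gp I * FExp false (g - gp) Iᶜ)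
      = (∑ d ∈ Finset.range ((g-gp)+1), Atm a b (g-gp-d) gp d)
        + (∑ d ∈ Finset.range (gp+1), Btm a b (gp-d) (g-gp) d) := by
    intro gp _
    rw [sum_finset_fin1, hbodyA g a b gp, hbodyB g a b gp]
  rw [Finset.sum_congr rfl step1, Finset.sum_add_distrib]
  -- type B sum: reflect the outer index
  have reflB : (∑ gp ∈ Finset.range (g+1), ∑ d ∈ Finset.range (gp+1), Btm a b (gp-d) (g-gp) d)
      = ∑ q ∈ Finset.range (g+1), ∑ d ∈ Finset.range ((g-q)+1), Btm a b (g-q-d) q d := by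
    rw [← Finset.sum_range_reflect]
    apply Finset.sum_congr rfl
    intro q hq
    have hqle : q ≤ g := by have := Finset.mem_range.mp hq; omega
    rw [show g + 1 - 1 - q = g - q by omega]
    apply Finset.sum_congr rfl
    intro d hd
    rw [show g - (g - q) = q by omega]
  rw [reflB]
  -- triangular reindexing on both
  rw [tri g (fun gp d => Atm a b (g-gp-d) gp d), tri g (fun q d => Btm a b (g-q-d) q d)]
  rw [← Finset.sum_add_distrib]
  apply Finset.sum_congr rfl
  intro h hh
  have hhle : h ≤ g := by have := Finset.mem_range.mp hh; omega
  have hsimpA : ∀ d ∈ Finset.range (g - h + 1),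
      Atm a b (g - (g-h-d) - d) (g-h-d) d = Atm a b h (g-h-d) d := by
    intro d hd
    have := Finset.mem_range.mp hd
    rw [show g - (g-h-d) - d = h by omega]
  have hsimpB : ∀ d ∈ Finset.range (g - h + 1),
      Btm a b (g - (g-h-d) - d) (g-h-d) d = Btm a b h (g-h-d) d := by
    intro d hd
    have := Finset.mem_range.mp hd
    rw [show g - (g-h-d) - d = h by omega]
  rw [Finset.sum_congr rfl hsimpA, Finset.sum_congr rfl hsimpB]
  -- collapse the inner sums via beta_conv
  have convA : (∑ d ∈ Finset.range (g - h + 1), Atm a b h (g-h-d) d)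
      = (κκ (γQ h) * (yLau 1 false * HahnSeries.C (X 0 : R 1))^h *
          ((LUnit true (0:R 1) ^ (a-2) : (Lau 1)ˣ) : Lau 1) *
          ((LUnit false (X 0:R 1) ^ (b+(h:ℤ)-1) : (Lau 1)ˣ) : Lau 1)) *
        (κκ (βQ (g-h)) * (HahnSeries.C (X 0 : R 1))^(3*(g-h))) := by
    unfold Atm
    rw [← Finset.mul_sum]
    have inner : (∑ d ∈ Finset.range (g - h + 1),
        κκ (βQ d) * κκ (βQ (g-h-d)) * ((yLau 1 false)^3 + (HahnSeries.C (X 0:R 1))^3)^d *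
          ((yLau 1 true)^3)^(g-h-d))
        = κκ (βQ (g-h)) * (HahnSeries.C (X 0 : R 1))^(3*(g-h)) := by
      rw [Finset.sum_congr rfl (fun d _ => by rw [← κκ_mul])]
      rw [beta_conv (g-h) ((yLau 1 false)^3 + (HahnSeries.C (X 0:R 1))^3) ((yLau 1 true)^3)]
      rw [show (yLau 1 false)^3 + (HahnSeries.C (X 0:R 1))^3 + (yLau 1 true)^3
          = (HahnSeries.C (X 0:R 1))^3 from by linear_combination yLau_cube_add]
      rw [← pow_mul]
    rw [inner]
  have convB : (∑ d ∈ Finset.range (g - h + 1), Btm a b h (g-h-d) d)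
      = (κκ (γQ h) * (yLau 1 true * HahnSeries.C (X 0 : R 1))^h *
          ((LUnit false (0:R 1) ^ (b-2) : (Lau 1)ˣ) : Lau 1) *
          ((LUnit true (X 0:R 1) ^ (a+(h:ℤ)-1) : (Lau 1)ˣ) : Lau 1)) *
        (κκ (βQ (g-h)) * (HahnSeries.C (X 0 : R 1))^(3*(g-h))) := by
    unfold Btm
    rw [← Finset.mul_sum]
    have inner : (∑ d ∈ Finset.range (g - h + 1),
        κκ (βQ d) * κκ (βQ (g-h-d)) * ((yLau 1 true)^3 + (HahnSeries.C (X 0:R 1))^3)^d *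
          ((yLau 1 false)^3)^(g-h-d))
        = κκ (βQ (g-h)) * (HahnSeries.C (X 0 : R 1))^(3*(g-h)) := by
      rw [Finset.sum_congr rfl (fun d _ => by rw [← κκ_mul])]
      rw [beta_conv (g-h) ((yLau 1 true)^3 + (HahnSeries.C (X 0:R 1))^3) ((yLau 1 false)^3)]
      rw [show (yLau 1 true)^3 + (HahnSeries.C (X 0:R 1))^3 + (yLau 1 false)^3
          = (HahnSeries.C (X 0:R 1))^3 from by linear_combination yLau_cube_add]
      rw [← pow_mul]
    rw [inner]
  rw [convA, convB, κκ_mul]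
  ring

end Aux

namespace Aux
open HahnSeries

lemma coeff_ofPS_int (f : PowerSeries (R 1)) (t : ℤ) :
    (ofPowerSeries ℤ (R 1) f).coeff t
      = if 0 ≤ t then PowerSeries.coeff t.toNat f else 0 := by
  by_cases hj : 0 ≤ t
  · rw [if_pos hj]
    conv_lhs => rw [show t = ((t.toNat : ℕ) : ℤ) from (Int.toNat_of_nonneg hj).symm]
    rw [ofPowerSeries_apply_coeff]
  · rw [if_neg hj, HahnSeries.ofPowerSeries_apply, HahnSeries.embDomain_notin_range]
    rintro ⟨m, hm⟩
    apply hj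
    rw [← hm]
    exact Int.natCast_nonneg m

lemma coeff_single_ofPS (s : ℤ) (r : R 1) (f : PowerSeries (R 1)) (E : ℤ) :
    (single s r * ofPowerSeries ℤ (R 1) f).coeff E
      = if 0 ≤ E - s then r * PowerSeries.coeff (E - s).toNat f else 0 := by
  have key : ∀ t : ℤ,
      (single s r * ofPowerSeries ℤ (R 1) f).coeff (t + s)
        = if 0 ≤ t then r * PowerSeries.coeff t.toNat f else 0 := by
    intro t
    rw [HahnSeries.coeff_single_mul_add, coeff_ofPS_int]
    by_cases hj : 0 ≤ t
    · rw [if_pos hj, if_pos hj]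
    · rw [if_neg hj, if_neg hj, mul_zero]
  have h2 := key (E - s)
  rwa [sub_add_cancel] at h2

lemma sum_coeff {ι : Type*} (s : Finset ι) (F : ι → Lau 1) (E : ℤ) :
    (∑ i ∈ s, F i).coeff E = ∑ i ∈ s, (F i).coeff E := by
  classical
  induction s using Finset.induction_on with
  | empty => simp
  | insert x s hxs ih =>
    rw [Finset.sum_insert hxs, Finset.sum_insert hxs, HahnSeries.coeff_add, ih]

lemma neg_single (s : ℤ) (r : R 1) : -(single s r) = single s (-r) := by
  ext E
  rw [HahnSeries.coeff_neg, HahnSeries.coeff_single, HahnSeries.coeff_single]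
  split_ifs <;> simp

/-- `±1` in the polynomial ring according to parity. -/
def εR (m : ℤ) : R 1 := if Even m then 1 else -1

lemma sgn_single (m : ℤ) (s : ℤ) (r : R 1) :
    (if Even m then (1 : Lau 1) else -1) * single s r = single s (εR m * r) := by
  unfold εR
  split_ifs
  · rw [one_mul, one_mul]
  · rw [show (-1 : R 1) * r = -r from by ring, ← neg_single]
    ring

lemma LExp_false_expand (c : R 1) (m : ℤ) :
    LExp false c m = single (-m) (εR m * 1) * ofPowerSeries ℤ (R 1) (PSb m (-c)) := by
  have h1 : LExp false c m
      = (if Even m then (1 : Lau 1) else -1) * yExpAdd (-c) m := by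
    simp [LExp]
  rw [h1, yExpAdd_def, ← mul_assoc, sgn_single]

lemma LExp_true_expand (c : R 1) (m : ℤ) :
    LExp true c m = single (-m) 1 * ofPowerSeries ℤ (R 1) (PSb m c) := by
  have h1 : LExp true c m = yExpAdd c m := by simp [LExp]
  rw [h1, yExpAdd_def]

lemma mul_single5 (s1 s2 s3 s4 s5 : ℤ) (r1 r2 r3 r4 r5 : R 1) (F : Lau 1) :
    (single s1 r1 * single s2 r2) * ((single s3 r3) * (single s4 r4) * (single s5 r5 * F))
      = single (s1+s2+s3+s4+s5) (r1*r2*r3*r4*r5) * F := by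
  have h : (single s1 r1 * single s2 r2) * ((single s3 r3) * (single s4 r4) * (single s5 r5 * F))
      = ((((single s1 r1 * single s2 r2) * single s3 r3) * single s4 r4) * single s5 r5) * F := by
    ring
  rw [h, single_mul_single, single_mul_single, single_mul_single, single_mul_single]

lemma yt_single : yLau 1 true = single (-1) (1 : R 1) := by
  unfold yLau; simp

lemma yfCx : yLau 1 false * HahnSeries.C (X 0 : R 1) = single (-1) (-(X 0)) := by
  have h1 : single (-1:ℤ) (1:R 1) * single 0 (X 0) = single (-1) (X 0) := by
    rw [single_mul_single]
    norm_num
  rw [yLau_false_neg, yt_single, HahnSeries.C_apply, ← neg_single]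
  linear_combination (-1 : Lau 1) * h1

lemma ytCx : yLau 1 true * HahnSeries.C (X 0 : R 1) = single (-1) (X 0) := by
  rw [yt_single, HahnSeries.C_apply, single_mul_single]
  norm_num

lemma κκ_single (q : ℚ) : κκ q = single 0 (MvPolynomial.C q) := by
  unfold κκ
  rw [HahnSeries.C_apply]

lemma CX_pow_single (N : ℕ) :
    (HahnSeries.C (X 0 : R 1))^N = (single (0:ℤ) ((X 0 : R 1)^N) : Lau 1) := by
  rw [HahnSeries.C_apply, single_pow, smul_zero]

lemma piece1 (g h : ℕ) (a b : ℤ) :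
    κκ (βQ (g-h) * γQ h) * (HahnSeries.C (X 0 : R 1))^(3*(g-h)) *
      ((yLau 1 false * HahnSeries.C (X 0 : R 1))^h *
        ((LUnit true (0:R 1) ^ (a-2) : (Lau 1)ˣ) : Lau 1) *
        ((LUnit false (X 0:R 1) ^ (b+(h:ℤ)-1) : (Lau 1)ˣ) : Lau 1))
    = single (3-a-b-2*(h:ℤ))
        (MvPolynomial.C (βQ (g-h) * γQ h) * (X 0 : R 1)^(3*(g-h)) * (-(X 0))^h *
          εR (b+(h:ℤ)-1)) *
      ofPowerSeries ℤ (R 1) (PSb (b+(h:ℤ)-1) (-(X 0))) := by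
  rw [yfCx, single_pow, ← LExp_zpow, LExp_true_c0, ← LExp_zpow, LExp_false_expand,
    κκ_single, CX_pow_single, mul_single5]
  rw [show (0 + 0 + h • (-1:ℤ) + -(a-2) + -(b+(h:ℤ)-1)) = 3-a-b-2*(h:ℤ) from by
    rw [nsmul_eq_mul]; push_cast; ring]
  congr 1
  congr 1
  ring

lemma piece2 (g h : ℕ) (a b : ℤ) :
    κκ (βQ (g-h) * γQ h) * (HahnSeries.C (X 0 : R 1))^(3*(g-h)) *
      ((yLau 1 true * HahnSeries.C (X 0 : R 1))^h *
        ((LUnit false (0:R 1) ^ (b-2) : (Lau 1)ˣ) : Lau 1) *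
        ((LUnit true (X 0:R 1) ^ (a+(h:ℤ)-1) : (Lau 1)ˣ) : Lau 1))
    = single (3-a-b-2*(h:ℤ))
        (MvPolynomial.C (βQ (g-h) * γQ h) * (X 0 : R 1)^(3*(g-h)) * (X 0)^h *
          εR (b-2)) *
      ofPowerSeries ℤ (R 1) (PSb (a+(h:ℤ)-1) (X 0)) := by
  rw [ytCx, single_pow, ← LExp_zpow, LExp_false_c0, sgn_single, ← LExp_zpow,
    LExp_true_expand, κκ_single, CX_pow_single, mul_single5]
  rw [show (0 + 0 + h • (-1:ℤ) + -(b-2) + -(a+(h:ℤ)-1)) = 3-a-b-2*(h:ℤ) from by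
    rw [nsmul_eq_mul]; push_cast; ring]
  congr 1
  congr 1
  ring

lemma r_cancel (c : ℚ) (N : ℕ) (b : ℤ) (g' : ℕ) :
    (MvPolynomial.C c * (X 0 : R 1)^N * (-(X 0))^g' * εR (b+(g':ℤ)-1))
      + (MvPolynomial.C c * (X 0 : R 1)^N * (X 0)^g' * εR (b-2)) = 0 := by
  rw [neg_pow]
  unfold εR
  rcases Int.even_or_odd b with hb | hb <;> rcases Nat.even_or_odd g' with hg | hg
  · have hb' := Int.even_iff.mp hb
    have hg' := Nat.even_iff.mp hg
    rw [if_neg (by rw [Int.even_iff]; omega), if_pos (by rw [Int.even_iff]; omega),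
      Even.neg_one_pow hg]
    ring
  · have hb' := Int.even_iff.mp hb
    have hg' := Nat.odd_iff.mp hg
    rw [if_pos (by rw [Int.even_iff]; omega), if_pos (by rw [Int.even_iff]; omega),
      Odd.neg_one_pow hg]
    ring
  · have hb' := Int.odd_iff.mp hb
    have hg' := Nat.even_iff.mp hg
    rw [if_pos (by rw [Int.even_iff]; omega), if_neg (by rw [Int.even_iff]; omega),
      Even.neg_one_pow hg]
    ring
  · have hb' := Int.odd_iff.mp hb
    have hg' := Nat.odd_iff.mp hg
    rw [if_neg (by rw [Int.even_iff]; omega), if_neg (by rw [Int.even_iff]; omega),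
      Odd.neg_one_pow hg]
    ring

end Aux

/-- Lemma 4.2 (i): in the one-variable case, for `k ≥ 2g−3+a+b`,
`[L_g^{a,b}(y,x)]_{y^k} = 0`. -/
theorem lemma_4_2_i (g : ℕ) (a b : ℤ) (k : ℤ) (hk : 2*(g : ℤ) - 3 + a + b ≤ k) (e : ℕ) :
    coeffL (LL g 1 a b) k (fun _ => e) = 0 := by
  unfold coeffL
  rw [Aux.LL_eq, Aux.sum_coeff, MvPolynomial.coeff_sum]
  apply Finset.sum_eq_zero
  intro h hh
  have hle : h ≤ g := by have := Finset.mem_range.mp hh; omega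
  rw [mul_add, Aux.piece1, Aux.piece2, HahnSeries.coeff_add,
    Aux.coeff_single_ofPS, Aux.coeff_single_ofPS]
  by_cases hj : 0 ≤ (-k) - (3-a-b-2*(h:ℤ))
  · have hk0 : (-k) - (3-a-b-2*(h:ℤ)) = 0 := by omega
    rw [if_pos hj, if_pos hj, hk0]
    rw [show (0:ℤ).toNat = 0 from rfl]
    rw [show PowerSeries.coeff 0 (Aux.PSb (b+(h:ℤ)-1) (-(X 0))) = 1 from by
      simp [Aux.PSb, Aux.binomZ_zero]]
    rw [show PowerSeries.coeff 0 (Aux.PSb (a+(h:ℤ)-1) (X 0)) = 1 from by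
      simp [Aux.PSb, Aux.binomZ_zero]]
    rw [mul_one, mul_one, Aux.r_cancel, MvPolynomial.coeff_zero]
  · rw [if_neg hj, if_neg hj, add_zero, MvPolynomial.coeff_zero]

end
end

section
/- For every integer g ≥ 1, Σ_{k=1}^{g} ( ((−1)^k/k!) (2g+1+k) Σ_{m_1+⋯+m_k=g, m_i ≥ 1} (2g+k)!/((2m_1+1)! (2m_2+1)! ⋯ (2m_k+1)!) ) = (−1)^g 2^{2g} (g!)^2, where the inner sum runs over ordered k-tuples (m_1,…,m_k) of positive integers with m_1+⋯+m_k = g. -/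
open PowerSeries Finset

noncomputable def zt : ℚ⟦X⟧ := PowerSeries.mk fun m => 1 / (2*m+1).factorial
noncomputable def zc : ℚ⟦X⟧ := PowerSeries.mk fun m => 1 / (2*m).factorial

lemma zt_coeff (m : ℕ) : PowerSeries.coeff (R := ℚ) m zt = 1 / (2*m+1).factorial :=
  PowerSeries.coeff_mk _ _
lemma zc_coeff (m : ℕ) : PowerSeries.coeff (R := ℚ) m zc = 1 / (2*m).factorial :=
  PowerSeries.coeff_mk _ _
lemma zt_const : PowerSeries.constantCoeff (R := ℚ) zt = 1 := by
  have := zt_coeff 0; simpa using this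
lemma zt_const_ne : PowerSeries.constantCoeff (R := ℚ) zt ≠ 0 := by rw [zt_const]; norm_num
lemma zt_mul_inv : zt * zt⁻¹ = 1 := PowerSeries.mul_inv_cancel _ zt_const_ne

lemma coeff_two_mul (f : ℚ⟦X⟧) (n : ℕ) :
    PowerSeries.coeff (R := ℚ) n (2 * f) = 2 * PowerSeries.coeff (R := ℚ) n f := by
  rw [← map_ofNat (PowerSeries.C (R := ℚ)) 2, PowerSeries.coeff_C_mul]

lemma coeff_natCast_mul (f : ℚ⟦X⟧) (n k : ℕ) :
    PowerSeries.coeff (R := ℚ) n ((k:ℚ⟦X⟧) * f) = k * PowerSeries.coeff (R := ℚ) n f := by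
  rw [← map_natCast (PowerSeries.C (R := ℚ)) k, PowerSeries.coeff_C_mul]

lemma zDc : d⁄dX ℚ zc = PowerSeries.C (R := ℚ) (1/2 : ℚ) * zt := by
  ext n
  rw [PowerSeries.coeff_derivative, PowerSeries.coeff_C_mul, zc_coeff, zt_coeff]
  have h : (2*(n+1)).factorial = (2*n+2) * (2*n+1).factorial := by
    have : 2*(n+1) = (2*n+1) + 1 := by ring
    rw [this, Nat.factorial_succ]
  rw [h]
  have h1 : ((2*n+1).factorial : ℚ) ≠ 0 := by positivity
  push_cast
  field_simp

lemma zc_eq : zc = zt + 2 * PowerSeries.X * d⁄dX ℚ zt := by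
  ext n
  rw [map_add, zc_coeff, zt_coeff]
  have hx : (2 : ℚ⟦X⟧) * PowerSeries.X * d⁄dX ℚ zt
      = PowerSeries.X * (2 * d⁄dX ℚ zt) := by ring
  rw [hx]
  cases n with
  | zero => simp
  | succ n =>
    rw [PowerSeries.coeff_succ_X_mul, coeff_two_mul, PowerSeries.coeff_derivative, zt_coeff]
    have h : (2*(n+1)+1).factorial = (2*n+3) * ((2*n+2) * (2*n+1).factorial) := by
      have e1 : 2*(n+1)+1 = (2*n+2) + 1 := by ring
      rw [e1, Nat.factorial_succ, Nat.factorial_succ]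
    have e2 : 2*(n+1) = (2*n+1)+1 := by ring
    rw [h, e2, Nat.factorial_succ]
    have h1 : ((2*n+1).factorial : ℚ) ≠ 0 := by positivity
    push_cast
    field_simp
    ring

lemma zc_sq : zc^2 = 1 + PowerSeries.X * zt^2 := by
  apply PowerSeries.derivative.ext
  · rw [Derivation.leibniz_pow, map_add]
    rw [show d⁄dX ℚ (1:ℚ⟦X⟧) = 0 from Derivation.map_one_eq_zero _]
    rw [Derivation.leibniz (d⁄dX ℚ) PowerSeries.X (zt^2), Derivation.leibniz_pow,
      PowerSeries.derivative_X]
    rw [zDc]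
    simp only [smul_eq_mul, nsmul_eq_mul]
    have hc := zc_eq
    -- goal: 2 * zc^1 * (C(1/2)*zt) = 0 + (X * (2*zt^1*Dt) + zt^2 * 1)
    have : PowerSeries.C (R := ℚ) (1/2 : ℚ) * 2 = 1 := by
      rw [← map_ofNat (PowerSeries.C (R := ℚ)) 2, ← map_mul]
      norm_num
    linear_combination zt * zc * this + zt * hc
  · simp [zc, zt, PowerSeries.constantCoeff_mk]

/-- tuple version of `coeff_pow` -/
lemma coeff_pow_tuple (φ : ℚ⟦X⟧) (k n : ℕ) :
    PowerSeries.coeff (R := ℚ) n (φ ^ k) =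
      ∑ m ∈ Finset.Nat.antidiagonalTuple k n, ∏ i, PowerSeries.coeff (R := ℚ) (m i) φ := by
  rw [PowerSeries.coeff_pow]
  refine Finset.sum_nbij' (fun l => fun i : Fin k => l i.val)
    (fun m => Finsupp.onFinset (range k)
      (fun j => if h : j < k then m ⟨j, h⟩ else 0)
      (fun j hj => by
        rw [Finset.mem_range]
        by_contra hc
        exact hj (dif_neg hc)))
    ?_ ?_ ?_ ?_ ?_
  · intro l hl
    rw [Finset.mem_finsuppAntidiag] at hl
    rw [Finset.Nat.mem_antidiagonalTuple]
    rw [← hl.1, Finset.sum_range fun j => l j]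
  · intro m hm
    rw [Finset.Nat.mem_antidiagonalTuple] at hm
    rw [Finset.mem_finsuppAntidiag]
    constructor
    · rw [← hm]
      rw [Finset.sum_range fun j => _]
      · apply Finset.sum_congr rfl
        intro i _
        simp [Finsupp.onFinset_apply, i.isLt]
    · exact Finsupp.support_onFinset_subset
  · intro l hl
    rw [Finset.mem_finsuppAntidiag] at hl
    ext j
    simp only [Finsupp.onFinset_apply]
    split_ifs with h
    · rfl
    · symm
      by_contra hc
      have := hl.2 (Finsupp.mem_support_iff.mpr fun h0 => hc h0)
      rw [Finset.mem_range] at this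
      exact h this
  · intro m hm
    funext i
    simp [Finsupp.onFinset_apply, i.isLt]
  · intro l hl
    rw [Finset.prod_range fun j => PowerSeries.coeff (R := ℚ) (l j) φ]

lemma zbinom {R : Type*} [CommRing R] (w v : R) (h : w + v = 1) (N : ℕ) :
    ∀ m : ℕ, v^(N+1) * (∑ k ∈ range (m+1), ((N+k).choose k : R) * w^k)
      + w^(m+1) * (∑ j ∈ range (N+1), ((m+j).choose j : R) * v^j) = 1 := by
  intro m
  induction m with
  | zero =>
    have hg := geom_sum_mul v (N+1)
    simp only [range_one, sum_singleton, Nat.add_zero, Nat.choose_self, Nat.cast_one,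
      pow_zero, mul_one, one_mul, Nat.zero_add, zero_add, pow_one]
    rw [Nat.choose_zero_right, Nat.cast_one, mul_one]
    linear_combination (∑ j ∈ range (N+1), v^j) * h - hg
  | succ m ih =>
    have tel : ∑ j ∈ range (N+1),
        ((((m+(j+1)).choose (m+1) : R) * v^(j+1)) - (((m+j).choose (m+1) : R) * v^j))
        = ((m+(N+1)).choose (m+1) : R) * v^(N+1) - ((m+0).choose (m+1) : R) * v^0 :=
      Finset.sum_range_sub (fun j => ((m+j).choose (m+1) : R) * v^j) (N+1)
    have point : ∀ j, ((m+j).choose j : R) * v^j - ((m+1+j).choose j : R) * w * v^j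
        = (((m+(j+1)).choose (m+1) : R) * v^(j+1)) - (((m+j).choose (m+1) : R) * v^j) := by
      intro j
      have hs1 : (m+j).choose j = (m+j).choose m := by
        rw [← Nat.choose_symm (Nat.le_add_left j m)]
        congr 1
        omega
      have hs2 : (m+1+j).choose j = (m+j).choose m + (m+j).choose (m+1) := by
        have e : m+1+j = (m+j)+1 := by omega
        rw [e, ← Nat.choose_succ_succ]
        rw [← Nat.choose_symm (by omega : j ≤ (m+j)+1)]
        congr 1
        omega
      have hs3 : (m+(j+1)).choose (m+1) = (m+j).choose m + (m+j).choose (m+1) := by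
        have e : m+(j+1) = (m+j)+1 := by omega
        rw [e, ← Nat.choose_succ_succ]
      rw [hs1, hs2, hs3]
      push_cast
      linear_combination (-(((m+j).choose m : R) + ((m+j).choose (m+1) : R)) * v^j) * h
    have star : w * (∑ j ∈ range (N+1), ((m+1+j).choose j : R) * v^j)
        + ((m+(N+1)).choose (m+1) : R) * v^(N+1)
        = ∑ j ∈ range (N+1), ((m+j).choose j : R) * v^j := by
      have hsum := Finset.sum_congr rfl (fun j (_ : j ∈ range (N+1)) => point j)
      rw [Finset.sum_sub_distrib, tel] at hsum
      have hB : ∑ x ∈ range (N+1), ((m+1+x).choose x : R) * w * v^x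
          = w * ∑ j ∈ range (N+1), ((m+1+j).choose j : R) * v^j := by
        rw [Finset.mul_sum]
        exact Finset.sum_congr rfl (fun j _ => by ring)
      rw [hB] at hsum
      simp only [Nat.add_zero, Nat.choose_succ_self, Nat.cast_zero, zero_mul, pow_zero,
        sub_zero] at hsum
      linear_combination -hsum
    rw [Finset.sum_range_succ]
    have hc : ((N+(m+1)).choose (m+1) : R) = ((m+(N+1)).choose (m+1) : R) := by
      congr 2
      omega
    rw [hc]
    linear_combination ih + w^(m+1) * star

lemma zhalf : PowerSeries.C (R := ℚ) (1/2 : ℚ) * 2 = 1 := by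
  rw [← map_ofNat (PowerSeries.C (R := ℚ)) 2, ← map_mul]
  norm_num

lemma zkey1 (g : ℕ) :
    2 * PowerSeries.X * d⁄dX ℚ (zc * zt⁻¹^(2*g+1)) =
      ((2*g+1 : ℕ) : ℚ⟦X⟧) * (zc * zt⁻¹^(2*g+1))
      - ((2*g+1 : ℕ) : ℚ⟦X⟧) * zt⁻¹^(2*g+2)
      - ((2*g : ℕ) : ℚ⟦X⟧) * (PowerSeries.X * zt⁻¹^(2*g)) := by
  have hD : d⁄dX ℚ (zc * zt⁻¹^(2*g+1)) =
      zc * ((2*g+1 : ℕ) • (zt⁻¹^(2*g) * (-zt⁻¹^2 * d⁄dX ℚ zt)))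
        + zt⁻¹^(2*g+1) * (PowerSeries.C (R := ℚ) (1/2 : ℚ) * zt) := by
    rw [Derivation.leibniz, Derivation.leibniz_pow, PowerSeries.derivative_inv', zDc]
    simp only [smul_eq_mul, Nat.add_sub_cancel]
  rw [hD, nsmul_eq_mul]
  have h1 := zt_mul_inv
  have h2 := zc_eq
  have h3 := zc_sq
  have hh := zhalf
  push_cast
  linear_combination (PowerSeries.X*zt*zt⁻¹^(2*g+1))*hh
    + ((2*(g:ℚ⟦X⟧)+1)*zc*zt⁻¹^(2*g+2))*h2
    - ((2*(g:ℚ⟦X⟧)+1)*zt⁻¹^(2*g+2))*h3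
    + ((2*(g:ℚ⟦X⟧)+1)*zc*zt⁻¹^(2*g+1) - (2*(g:ℚ⟦X⟧)+1)*PowerSeries.X*zt*zt⁻¹^(2*g+1)
        - (2*(g:ℚ⟦X⟧))*PowerSeries.X*zt⁻¹^(2*g))*h1

lemma zkey2 (m : ℕ) : PowerSeries.coeff (R := ℚ) (m+1) (zc * zt⁻¹^(2*(m+1)+1)) = 0 := by
  have h1 := zt_mul_inv
  have h2 := zc_eq
  have e0 : zc * zt⁻¹^(2*(m+1)+1) = zt⁻¹^(2*(m+1))
      + PowerSeries.X * (2 * (d⁄dX ℚ zt * zt⁻¹^(2*(m+1)+1))) := by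
    linear_combination zt⁻¹^(2*(m+1)+1)*h2 + zt⁻¹^(2*(m+1))*h1
  have e1 : d⁄dX ℚ (zt⁻¹^(2*(m+1))) =
      -((2*(m+1) : ℕ) : ℚ⟦X⟧) * (d⁄dX ℚ zt * zt⁻¹^(2*(m+1)+1)) := by
    rw [Derivation.leibniz_pow, PowerSeries.derivative_inv', nsmul_eq_mul, Nat.cast_mul]
    have : 2*(m+1) - 1 = 2*m+1 := by omega
    rw [this]
    simp only [smul_eq_mul]
    push_cast
    ring
  have c1 : PowerSeries.coeff (R := ℚ) m (d⁄dX ℚ (zt⁻¹^(2*(m+1)))) =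
      PowerSeries.coeff (R := ℚ) (m+1) (zt⁻¹^(2*(m+1))) * (m+1) :=
    PowerSeries.coeff_derivative _ _
  rw [e1] at c1
  rw [e0, map_add, PowerSeries.coeff_succ_X_mul]
  rw [coeff_two_mul]
  set A := PowerSeries.coeff (R := ℚ) (m+1) (zt⁻¹^(2*(m+1)))
  set B := PowerSeries.coeff (R := ℚ) m (d⁄dX ℚ zt * zt⁻¹^(2*(m+1)+1))
  have hc1 : -(((2*(m+1) : ℕ) : ℚ) * B) = A * (m+1) := by
    rw [← c1]
    rw [show (-((2*(m+1):ℕ):ℚ⟦X⟧) * (d⁄dX ℚ zt * zt⁻¹^(2*(m+1)+1)))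
        = ((2*(m+1):ℕ):ℚ⟦X⟧) * (-(d⁄dX ℚ zt * zt⁻¹^(2*(m+1)+1))) from by ring,
      coeff_natCast_mul, map_neg]
    ring
  have hm : ((m:ℚ)+1) ≠ 0 := by positivity
  have h' : ((m:ℚ)+1) * (A + 2*B) = 0 := by
    push_cast at hc1
    linear_combination -hc1
  rcases mul_eq_zero.mp h' with h|h
  · exact absurd h hm
  · exact h

lemma zrec (m : ℕ) :
    ((2*(m+1)+1 : ℕ) : ℚ) * PowerSeries.coeff (R := ℚ) (m+1) (zt⁻¹^(2*(m+1)+2))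
      + ((2*(m+1) : ℕ) : ℚ) * PowerSeries.coeff (R := ℚ) m (zt⁻¹^(2*m+2)) = 0 := by
  have hk := zkey1 (m+1)
  have happ := congrArg (PowerSeries.coeff (R := ℚ) (m+1)) hk
  rw [show (2 : ℚ⟦X⟧) * PowerSeries.X * d⁄dX ℚ (zc * zt⁻¹^(2*(m+1)+1))
      = PowerSeries.X * (2 * d⁄dX ℚ (zc * zt⁻¹^(2*(m+1)+1))) from by ring,
    PowerSeries.coeff_succ_X_mul, coeff_two_mul, PowerSeries.coeff_derivative] at happ
  rw [zkey2 m] at happ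
  rw [map_sub, map_sub, coeff_natCast_mul, coeff_natCast_mul, coeff_natCast_mul,
    zkey2 m, PowerSeries.coeff_succ_X_mul] at happ
  rw [show 2*(m+1) = 2*m+2 from by ring] at happ ⊢
  push_cast at happ ⊢
  linarith [happ]

lemma zu0 : PowerSeries.coeff (R := ℚ) 0 (zt⁻¹^(2*0+2)) = 1 := by
  rw [PowerSeries.coeff_zero_eq_constantCoeff, map_pow, PowerSeries.constantCoeff_inv, zt_const]
  norm_num

lemma zufin (g : ℕ) :
    ((2*g+1).factorial : ℚ) * PowerSeries.coeff (R := ℚ) g (zt⁻¹^(2*g+2))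
      = (-1)^g * 4^g * ((g.factorial : ℚ))^2 := by
  induction g with
  | zero => simpa using zu0
  | succ m ih =>
    have hr := zrec m
    set A := PowerSeries.coeff (R := ℚ) (m+1) (zt⁻¹^(2*(m+1)+2)) with hA
    set B := PowerSeries.coeff (R := ℚ) m (zt⁻¹^(2*m+2)) with hB
    have hfac : ((2*(m+1)+1).factorial : ℚ)
        = (2*m+3) * ((2*m+2) * (2*m+1).factorial) := by
      rw [show 2*(m+1)+1 = (2*m+2)+1 from by ring, Nat.factorial_succ,
        show 2*m+2 = (2*m+1)+1 from by ring, Nat.factorial_succ]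
      push_cast
      ring
    have hfacm : (((m+1).factorial : ℚ)) = (m+1) * m.factorial := by
      rw [Nat.factorial_succ]; push_cast; ring
    rw [hfac, hfacm]
    push_cast at hr ih ⊢
    have h1 : ((2*m+1).factorial : ℚ) * B = (-1)^m * 4^m * (m.factorial:ℚ)^2 := ih
    have h2 : (2*(m:ℚ)+3) * A = -(2*m+2) * B := by linarith [hr]
    calc (2*(m:ℚ)+3) * ((2*m+2) * (2*m+1).factorial) * A
        = (2*m+2) * ((2*m+1).factorial : ℚ) * ((2*(m:ℚ)+3) * A) := by ring
      _ = (2*m+2) * ((2*m+1).factorial : ℚ) * (-(2*m+2) * B) := by rw [h2]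
      _ = -(2*m+2)^2 * (((2*m+1).factorial : ℚ) * B) := by ring
      _ = -(2*m+2)^2 * ((-1)^m * 4^m * (m.factorial:ℚ)^2) := by rw [h1]
      _ = (-1)^(m+1) * 4^(m+1) * (((m:ℚ)+1) * m.factorial)^2 := by ring

lemma zS1coeff (g : ℕ) :
    ∑ k ∈ range (g+1), ((2*g+1+k).choose k : ℚ) * PowerSeries.coeff (R := ℚ) g ((1-zt)^k)
      = PowerSeries.coeff (R := ℚ) g (zt⁻¹^(2*g+2)) := by
  have hb := zbinom (1-zt) zt (by ring) (2*g+1) g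
  set S1 := ∑ k ∈ range (g+1), (((2*g+1+k).choose k : ℕ) : ℚ⟦X⟧) * (1-zt)^k with hS1def
  set S2 := ∑ j ∈ range (2*g+1+1), (((g+j).choose j : ℕ) : ℚ⟦X⟧) * zt^j with hS2def
  have hp : zt^(2*g+2) * zt⁻¹^(2*g+2) = 1 := by
    rw [← mul_pow, zt_mul_inv, one_pow]
  have hb' : zt^(2*g+2) * S1 + (1-zt)^(g+1) * S2 = 1 := hb
  have hS1 : S1 = zt⁻¹^(2*g+2) - (1-zt)^(g+1) * (S2 * zt⁻¹^(2*g+2)) := by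
    linear_combination zt⁻¹^(2*g+2) * hb' - S1 * hp
  have hw0 : PowerSeries.constantCoeff (R := ℚ) (1 - zt) = 0 := by
    rw [map_sub, map_one, zt_const, sub_self]
  obtain ⟨s, hs⟩ := PowerSeries.X_dvd_iff.mpr hw0
  have hvan : PowerSeries.coeff (R := ℚ) g ((1-zt)^(g+1) * (S2 * zt⁻¹^(2*g+2))) = 0 := by
    rw [hs, mul_pow, mul_assoc, PowerSeries.coeff_X_pow_mul']
    rw [if_neg (by omega)]
  calc ∑ k ∈ range (g+1), ((2*g+1+k).choose k : ℚ) * PowerSeries.coeff (R := ℚ) g ((1-zt)^k)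
      = PowerSeries.coeff (R := ℚ) g S1 := by
        rw [hS1def, map_sum]
        exact Finset.sum_congr rfl (fun k _ => (coeff_natCast_mul _ _ _).symm)
    _ = PowerSeries.coeff (R := ℚ) g (zt⁻¹^(2*g+2)) := by
        rw [hS1, map_sub, hvan, sub_zero]

lemma zw_coeff (n : ℕ) :
    PowerSeries.coeff (R := ℚ) n (zt - 1) = if n = 0 then (0:ℚ) else (1:ℚ)/(((2*n+1).factorial : ℕ) : ℚ) := by
  rw [map_sub, zt_coeff, PowerSeries.coeff_one]
  split_ifs with h
  · subst h; norm_num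
  · rw [sub_zero]

lemma zinner (g k : ℕ) :
    PowerSeries.coeff (R := ℚ) g ((zt - 1)^k)
      = ∑ m ∈ (Finset.Nat.antidiagonalTuple k g).filter (fun m => ∀ i, 1 ≤ m i),
          ∏ i, (1 / (((2*(m i)+1).factorial : ℚ))) := by
  rw [coeff_pow_tuple]
  rw [← Finset.sum_filter_of_ne (p := fun m => ∀ i, 1 ≤ m i) ?hne]
  case hne =>
    intro m _ hne i
    by_contra hlt
    apply hne
    apply Finset.prod_eq_zero (Finset.mem_univ i)
    rw [zw_coeff, if_pos (by omega)]
  apply Finset.sum_congr rfl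
  intro m hm
  rw [Finset.mem_filter] at hm
  apply Finset.prod_congr rfl
  intro i _
  rw [zw_coeff, if_neg (by have := hm.2 i; omega)]

/-- Zagier's combinatorial identity:
`Σ_{k=1}^g ((−1)^k/k!)(2g+1+k) Σ_{m_1+⋯+m_k=g, m_i≥1} (2g+k)!/Π (2m_i+1)! = (−1)^g 2^{2g} (g!)²`,
the inner sum over ordered `k`-tuples of positive integers summing to `g`. -/
theorem zagier_identity (g : ℕ) (hg : 1 ≤ g) :
    ∑ k ∈ Finset.Icc 1 g,
      ((-1 : ℚ)^k / (Nat.factorial k : ℚ)) * ((2*g+1+k : ℕ) : ℚ) *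
        ∑ m ∈ (Finset.Nat.antidiagonalTuple k g).filter (fun m => ∀ i, 1 ≤ m i),
          (((2*g+k).factorial : ℚ) / ∏ i, ((2*(m i)+1).factorial : ℚ))
      = (-1 : ℚ)^g * 2^(2*g) * ((g.factorial : ℚ))^2 := by
  have key : ∀ k ∈ Finset.Icc 1 g,
      ((-1 : ℚ)^k / (Nat.factorial k : ℚ)) * ((2*g+1+k : ℕ) : ℚ) *
        ∑ m ∈ (Finset.Nat.antidiagonalTuple k g).filter (fun m => ∀ i, 1 ≤ m i),
          (((2*g+k).factorial : ℚ) / ∏ i, ((2*(m i)+1).factorial : ℚ))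
      = ((2*g+1).factorial : ℚ) *
          (((2*g+1+k).choose k : ℚ) * PowerSeries.coeff (R := ℚ) g ((1-zt)^k)) := by
    intro k _
    have hin : ∑ m ∈ (Finset.Nat.antidiagonalTuple k g).filter (fun m => ∀ i, 1 ≤ m i),
          (((2*g+k).factorial : ℚ) / ∏ i, ((2*(m i)+1).factorial : ℚ))
        = ((2*g+k).factorial : ℚ) * PowerSeries.coeff (R := ℚ) g ((zt-1)^k) := by
      rw [zinner, Finset.mul_sum]
      apply Finset.sum_congr rfl
      intro m _
      rw [div_eq_mul_inv, ← Finset.prod_inv_distrib]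
      congr 1
      apply Finset.prod_congr rfl
      intro i _
      rw [one_div]
    have hneg : PowerSeries.coeff (R := ℚ) g ((zt-1)^k)
        = (-1:ℚ)^k * PowerSeries.coeff (R := ℚ) g ((1-zt)^k) := by
      have h1 : (zt - 1 : ℚ⟦X⟧) = -(1 - zt) := by ring
      rw [h1, neg_pow]
      have h2 : ((-1:ℚ⟦X⟧))^k = PowerSeries.C (R := ℚ) ((-1:ℚ)^k) := by
        rw [map_pow, map_neg, map_one]
      rw [h2, PowerSeries.coeff_C_mul]
    rw [hin, hneg]
    have hnat : (2*g+1+k).choose k * k.factorial * (2*g+1).factorial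
        = (2*g+1+k).factorial := by
      have h := Nat.choose_mul_factorial_mul_factorial (show k ≤ 2*g+1+k by omega)
      rw [show 2*g+1+k-k = 2*g+1 from by omega] at h
      exact h
    have hfs : (2*g+1+k).factorial = (2*g+1+k) * (2*g+k).factorial := by
      rw [show 2*g+1+k = (2*g+k)+1 from by omega, Nat.factorial_succ]
    have hc1 : ((2*g+1+k).choose k : ℚ) * k.factorial * (2*g+1).factorial
        = ((2*g+1+k).factorial : ℚ) := by exact_mod_cast congrArg (Nat.cast (R := ℚ)) hnat
    have hc2 : ((2*g+1+k).factorial : ℚ) = ((2*g+1+k : ℕ) : ℚ) * (2*g+k).factorial := by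
      exact_mod_cast congrArg (Nat.cast (R := ℚ)) hfs
    have hsq : (-1:ℚ)^k * (-1)^k = 1 := by
      rw [← mul_pow]; norm_num
    have hkf : (k.factorial : ℚ) ≠ 0 := by positivity
    set c := PowerSeries.coeff (R := ℚ) g ((1-zt)^k)
    push_cast at hc1 hc2 ⊢
    field_simp
    linear_combination ((2*(g:ℚ)+1+(k:ℚ)) * ((2*g+k).factorial : ℚ) * c) * hsq
      - c * hc2 - c * hc1
  rw [Finset.sum_congr rfl key, ← Finset.mul_sum]
  have hzero : (((2*g+1+0).choose 0 : ℚ) * PowerSeries.coeff (R := ℚ) g ((1-zt)^0)) = 0 := by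
    rw [pow_zero, PowerSeries.coeff_one, if_neg (by omega)]
    ring
  have hins : Finset.range (g+1) = insert 0 (Finset.Icc 1 g) := by
    ext x
    simp only [Finset.mem_range, Finset.mem_insert, Finset.mem_Icc]
    omega
  have hext : ∑ k ∈ Finset.Icc 1 g,
      (((2*g+1+k).choose k : ℚ) * PowerSeries.coeff (R := ℚ) g ((1-zt)^k))
      = ∑ k ∈ Finset.range (g+1),
      (((2*g+1+k).choose k : ℚ) * PowerSeries.coeff (R := ℚ) g ((1-zt)^k)) := by
    rw [hins, Finset.sum_insert (by simp), hzero, zero_add]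
  rw [hext]
  rw [zS1coeff g, zufin]
  rw [show (4:ℚ)^g = 2^(2*g) from by rw [pow_mul]; norm_num]
end
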